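/- arXiv:1512.04046 — 6 statements merged into one kernel-verified Lean document; each statement's English description precedes it below -/
import Mathlib

section
/- Let k ≥ 0 and let D be an element of C_k, written as a multilinear map D(y₁,…,y_k; x₁,x₂,x₃,x₄). Arrange the k+4 arguments in slots 1,…,k+4 so that slots 1–4 carry x₁,…,x₄ and slots 5,…,k+4 carry y₁,…,y_k, and let c denote the Young symmetrizer of the tableau with rows {1,3,5,6,…,k+4} and {2,4} and columns {1,2} and {3,4}. Then c·D = 2(k+3)(k+2)·k!·D. -/
open scoped RealInnerProductSpace

namespace CurvJet

variable {V : Type*} [NormedAddCommGroup V] [InnerProductSpace ℝ V] {n : ℕ}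

/-- Quadrilinear forms on `V`, the ambient space of algebraic curvature tensors. -/
abbrev Curv (V : Type*) [NormedAddCommGroup V] [InnerProductSpace ℝ V] : Type _ :=
  V →ₗ[ℝ] V →ₗ[ℝ] V →ₗ[ℝ] V →ₗ[ℝ] ℝ

/-- The underlying 4-argument function of a quadrilinear form. -/
def toFun4 (R : Curv V) : V → V → V → V → ℝ := fun z₁ z₂ z₃ z₄ => R z₁ z₂ z₃ z₄

/-- `R` is an algebraic curvature tensor: antisymmetry in the first pair, pair symmetry,
and the first Bianchi identity. -/
def IsCurv (R : Curv V) : Prop :=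
  (∀ x y z w, R x y z w = - R y x z w) ∧
  (∀ x y z w, R x y z w = R z w x y) ∧
  (∀ x y z w, R x y z w + R y z x w + R z x y w = 0)

/-- The Ricci tensor `ric_R(x,y) = -∑ᵢ R(x,eᵢ,y,eᵢ)`. -/
noncomputable def ric (e : OrthonormalBasis (Fin n) ℝ V) (R : Curv V) (x y : V) : ℝ :=
  - ∑ i, R x (e i) y (e i)

/-- The curvature endomorphism `R_{x,y}`, characterized by `⟪R_{x,y}z, w⟫ = R(x,y,z,w)`. -/
noncomputable def curvEnd (e : OrthonormalBasis (Fin n) ℝ V) (R : Curv V) (x y z : V) : V :=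
  ∑ i, R x y z (e i) • e i

/-- Action of an endomorphism `B` on a covariant 4-tensor by algebraic derivation. -/
def act4 (B : V → V) (A : V → V → V → V → ℝ) (x₁ x₂ x₃ x₄ : V) : ℝ :=
  -(A (B x₁) x₂ x₃ x₄ + A x₁ (B x₂) x₃ x₄ + A x₁ x₂ (B x₃) x₄ + A x₁ x₂ x₃ (B x₄))

/-- Action of an endomorphism `B` on a covariant 2-tensor by algebraic derivation. -/
def act2 (B : V → V) (A : V → V → ℝ) (x y : V) : ℝ :=
  -(A (B x) y + A x (B y))

/-- `R*A` for a covariant 4-tensor `A`. -/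
noncomputable def star4 (e : OrthonormalBasis (Fin n) ℝ V) (R : Curv V)
    (A : V → V → V → V → ℝ) (x₁ x₂ x₃ x₄ : V) : ℝ :=
  -((∑ j, act4 (curvEnd e R x₁ (e j)) A (e j) x₂ x₃ x₄)
    + (∑ j, act4 (curvEnd e R x₂ (e j)) A x₁ (e j) x₃ x₄)
    + (∑ j, act4 (curvEnd e R x₃ (e j)) A x₁ x₂ (e j) x₄)
    + (∑ j, act4 (curvEnd e R x₄ (e j)) A x₁ x₂ x₃ (e j)))

/-- `R*A` for a covariant 2-tensor `A`. -/
noncomputable def star2 (e : OrthonormalBasis (Fin n) ℝ V) (R : Curv V)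
    (A : V → V → ℝ) (x y : V) : ℝ :=
  -((∑ j, act2 (curvEnd e R x (e j)) A (e j) y)
    + (∑ j, act2 (curvEnd e R y (e j)) A x (e j)))

/-- The algebraic curvature tensor `R*R`. -/
noncomputable def RstarR (e : OrthonormalBasis (Fin n) ℝ V) (R : Curv V) :
    V → V → V → V → ℝ :=
  star4 e R (toFun4 R)

/-- Row symmetrization of the Young tableau with rows `{1,3}`, `{2,4}` on a 4-tensor. -/
def rowSym22 (T : V → V → V → V → ℝ) (x₁ x₂ x₃ x₄ : V) : ℝ :=
  T x₁ x₂ x₃ x₄ + T x₃ x₂ x₁ x₄ + T x₁ x₄ x₃ x₂ + T x₃ x₄ x₁ x₂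

/-- The Young symmetrizer of the tableau with rows `{1,3}`, `{2,4}` and columns
`{1,2}`, `{3,4}`, acting on 4-tensors. -/
def young22 (T : V → V → V → V → ℝ) (x₁ x₂ x₃ x₄ : V) : ℝ :=
  rowSym22 T x₁ x₂ x₃ x₄ - rowSym22 T x₂ x₁ x₃ x₄
    - rowSym22 T x₁ x₂ x₄ x₃ + rowSym22 T x₂ x₁ x₄ x₃

/-- Row symmetrization of the Young tableau with rows `{1,3,5,6}`, `{2,4}` on a 6-tensor. -/
noncomputable def rowSym42 (T : V → V → V → V → V → V → ℝ) (x₁ x₂ x₃ x₄ x₅ x₆ : V) : ℝ :=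
  ∑ σ : Equiv.Perm (Fin 4),
    (T (![x₁, x₃, x₅, x₆] (σ 0)) x₂ (![x₁, x₃, x₅, x₆] (σ 1)) x₄
        (![x₁, x₃, x₅, x₆] (σ 2)) (![x₁, x₃, x₅, x₆] (σ 3))
     + T (![x₁, x₃, x₅, x₆] (σ 0)) x₄ (![x₁, x₃, x₅, x₆] (σ 1)) x₂
        (![x₁, x₃, x₅, x₆] (σ 2)) (![x₁, x₃, x₅, x₆] (σ 3)))

/-- The Young symmetrizer of the tableau on six slots with rows `{1,3,5,6}`, `{2,4}` and
columns `{1,2}`, `{3,4}`. -/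
noncomputable def young42 (T : V → V → V → V → V → V → ℝ) (x₁ x₂ x₃ x₄ x₅ x₆ : V) : ℝ :=
  rowSym42 T x₁ x₂ x₃ x₄ x₅ x₆ - rowSym42 T x₂ x₁ x₃ x₄ x₅ x₆
    - rowSym42 T x₁ x₂ x₄ x₃ x₅ x₆ + rowSym42 T x₂ x₁ x₄ x₃ x₅ x₆

/-- Row symmetrization of the Young tableau with rows `{1,3,5}`, `{2,4}` on a 5-tensor
(the fifth function argument is the slot lying in the first row). -/
noncomputable def rowSym5 (T : V → V → V → V → V → ℝ) (z₁ z₂ z₃ z₄ z₅ : V) : ℝ :=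
  ∑ σ : Equiv.Perm (Fin 3),
    (T (![z₁, z₃, z₅] (σ 0)) z₂ (![z₁, z₃, z₅] (σ 1)) z₄ (![z₁, z₃, z₅] (σ 2))
     + T (![z₁, z₃, z₅] (σ 0)) z₄ (![z₁, z₃, z₅] (σ 1)) z₂ (![z₁, z₃, z₅] (σ 2)))

/-- The Young symmetrizer of the tableau on five slots with rows `{1,3,5}`, `{2,4}` and
columns `{1,2}`, `{3,4}` (the fifth function argument is the slot in the first row). -/
noncomputable def young5 (T : V → V → V → V → V → ℝ) (z₁ z₂ z₃ z₄ z₅ : V) : ℝ :=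
  rowSym5 T z₁ z₂ z₃ z₄ z₅ - rowSym5 T z₂ z₁ z₃ z₄ z₅
    - rowSym5 T z₁ z₂ z₄ z₃ z₅ + rowSym5 T z₂ z₁ z₄ z₃ z₅

/-- First-order jet conditions: each `∇ₓR` is a curvature tensor and the second Bianchi
identity holds. -/
def IsJet1 (D1 : V →ₗ[ℝ] Curv V) : Prop :=
  (∀ x, IsCurv (D1 x)) ∧
  (∀ x y z u v, D1 x y z u v + D1 y z x u v + D1 z x y u v = 0)

/-- Second-order jet conditions: each `∇²_{x,y}R` is a curvature tensor, the second Bianchi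
identity holds, and the Ricci identity `∇²_{x,y}R − ∇²_{y,x}R = R_{x,y}·R` holds. -/
def IsJet2 (e : OrthonormalBasis (Fin n) ℝ V) (R : Curv V)
    (D2 : V →ₗ[ℝ] V →ₗ[ℝ] Curv V) : Prop :=
  (∀ x y, IsCurv (D2 x y)) ∧
  (∀ x y z w u v, D2 x y z w u v + D2 x z w y u v + D2 x w y z u v = 0) ∧
  (∀ x y z₁ z₂ z₃ z₄, D2 x y z₁ z₂ z₃ z₄ - D2 y x z₁ z₂ z₃ z₄ =
    act4 (curvEnd e R x y) (toFun4 R) z₁ z₂ z₃ z₄)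

/-- Algebraic two-jet `(R, ∇R, ∇²R)`. -/
def IsTwoJet (e : OrthonormalBasis (Fin n) ℝ V) (R : Curv V)
    (D1 : V →ₗ[ℝ] Curv V) (D2 : V →ₗ[ℝ] V →ₗ[ℝ] Curv V) : Prop :=
  IsCurv R ∧ IsJet1 D1 ∧ IsJet2 e R D2

/-- `∇ₓric(y,z) = -∑ᵢ ∇ₓR(y,eᵢ,z,eᵢ)`. -/
noncomputable def nablaRic (e : OrthonormalBasis (Fin n) ℝ V)
    (D1 : V →ₗ[ℝ] Curv V) (x y z : V) : ℝ :=
  - ∑ i, D1 x y (e i) z (e i)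

/-- `∇²_{x,y}ric(z,w) = -∑ᵢ ∇²_{x,y}R(z,eᵢ,w,eᵢ)`. -/
noncomputable def nabla2Ric (e : OrthonormalBasis (Fin n) ℝ V)
    (D2 : V →ₗ[ℝ] V →ₗ[ℝ] Curv V) (x y z w : V) : ℝ :=
  - ∑ i, D2 x y z (e i) w (e i)

/-- The rough Laplacian `∇*∇R(z₁,z₂,z₃,z₄) = -∑ᵢ ∇²_{eᵢ,eᵢ}R(z₁,z₂,z₃,z₄)`. -/
noncomputable def roughLap (e : OrthonormalBasis (Fin n) ℝ V)
    (D2 : V →ₗ[ℝ] V →ₗ[ℝ] Curv V) (z₁ z₂ z₃ z₄ : V) : ℝ :=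
  - ∑ i, D2 (e i) (e i) z₁ z₂ z₃ z₄

/-- `∇ₓδ_yR(z,w) = -∑ᵢ ∇²_{x,eᵢ}R(eᵢ,y,z,w)`. -/
noncomputable def nablaDelta (e : OrthonormalBasis (Fin n) ℝ V)
    (D2 : V →ₗ[ℝ] V →ₗ[ℝ] Curv V) (x y z w : V) : ℝ :=
  - ∑ i, D2 x (e i) (e i) y z w

/-- The two-jet is Einstein: `ric = c⟪·,·⟫`, `∇ric = 0` and `∇²ric = 0`. -/
def IsEinsteinJet (e : OrthonormalBasis (Fin n) ℝ V) (R : Curv V)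
    (D1 : V →ₗ[ℝ] Curv V) (D2 : V →ₗ[ℝ] V →ₗ[ℝ] Curv V) : Prop :=
  (∃ c : ℝ, ∀ x y, ric e R x y = c * ⟪x, y⟫) ∧
  (∀ x y z, nablaRic e D1 x y z = 0) ∧
  (∀ x y z w, nabla2Ric e D2 x y z w = 0)


/-- Row symmetrization for the tableau with rows `{1,3,5,…,k+4}` and `{2,4}` acting on a
`(k+4)`-tensor `D(y₁,…,y_k;x₁,x₂,x₃,x₄)`, where slots `1,2,3,4` carry `x₁,…,x₄` and slots
`5,…,k+4` carry `y₁,…,y_k`. -/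
noncomputable def rowK (k : ℕ) (D : (Fin k → V) → V → V → V → V → ℝ)
    (y : Fin k → V) (x₁ x₂ x₃ x₄ : V) : ℝ :=
  ∑ σ : Equiv.Perm (Fin (k + 2)),
    (fun v : Fin (k + 2) → V =>
      D (fun i => v (σ ⟨(i : ℕ) + 2, by omega⟩)) (v (σ ⟨0, by omega⟩)) x₂
          (v (σ ⟨1, by omega⟩)) x₄
        + D (fun i => v (σ ⟨(i : ℕ) + 2, by omega⟩)) (v (σ ⟨0, by omega⟩)) x₄
          (v (σ ⟨1, by omega⟩)) x₂)
      (Fin.cons x₁ (Fin.cons x₃ y))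

/-- The Young symmetrizer of the tableau with rows `{1,3,5,…,k+4}`, `{2,4}` and columns
`{1,2}`, `{3,4}`. -/
noncomputable def youngK (k : ℕ) (D : (Fin k → V) → V → V → V → V → ℝ)
    (y : Fin k → V) (x₁ x₂ x₃ x₄ : V) : ℝ :=
  rowK k D y x₁ x₂ x₃ x₄ - rowK k D y x₂ x₁ x₃ x₄
    - rowK k D y x₁ x₂ x₄ x₃ + rowK k D y x₂ x₁ x₄ x₃



private lemma youngId4 {V : Type*} (R : V → V → V → V → ℝ)
    (r1 : ∀ a b c d, R a b c d + R b a c d = 0)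
    (r2 : ∀ a b c d, R a b c d = R c d a b)
    (r3 : ∀ a b c d, R a b c d + R b c a d + R c a b d = 0)
    (x1 x2 x3 x4 : V) :
    ((R x1 x2 x3 x4 + R x3 x2 x1 x4 + R x1 x4 x3 x2 + R x3 x4 x1 x2)
      - (R x2 x1 x3 x4 + R x3 x1 x2 x4 + R x2 x4 x3 x1 + R x3 x4 x2 x1)
      - (R x1 x2 x4 x3 + R x4 x2 x1 x3 + R x1 x3 x4 x2 + R x4 x3 x1 x2)
      + (R x2 x1 x4 x3 + R x4 x1 x2 x3 + R x2 x3 x4 x1 + R x4 x3 x2 x1))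
    = 12 * R x1 x2 x3 x4 := by
  linear_combination (-4 : ℝ) * (r1 x1 x2 x3 x4) + (1 : ℝ) * (r3 x1 x3 x2 x4) + (1 : ℝ) * (r1 x1 x4 x3 x2) + (-1 : ℝ) * (r3 x1 x3 x4 x2) + (-2 : ℝ) * (r2 x1 x2 x3 x4) + (-5 : ℝ) * (r2 x1 x4 x2 x3) + (6 : ℝ) * (r1 x1 x4 x2 x3) + (-5 : ℝ) * (r3 x1 x2 x3 x4) + (4 : ℝ) * (r1 x1 x3 x2 x4) + (-1 : ℝ) * (r3 x1 x4 x2 x3) + (-5 : ℝ) * (r2 x1 x3 x2 x4) + (-5 : ℝ) * (r3 x1 x2 x4 x3) + (3 : ℝ) * (r1 x1 x2 x4 x3) + (-1 : ℝ) * (r1 x2 x4 x3 x1) + (1 : ℝ) * (r3 x2 x3 x4 x1) + (2 : ℝ) * (r2 x2 x1 x3 x4) + (1 : ℝ) * (r2 x1 x2 x4 x3) + (-1 : ℝ) * (r2 x2 x1 x4 x3)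

private lemma youngId5 {V : Type*} (E : V → V → V → V → V → ℝ)
    (h1 : ∀ a b c d e, E a b c d e + E a c b d e = 0)
    (h2 : ∀ a b c d e, E a b c d e = E a d e b c)
    (h3 : ∀ a b c d e, E a b c d e + E a c d b e + E a d b c e = 0)
    (h4 : ∀ a b c d e, E a b c d e + E b c a d e + E c a b d e = 0)
    (u x1 x2 x3 x4 : V) :
    ((E x3 x1 x2 u x4 + E x1 x3 x2 u x4 + E x1 u x2 x3 x4 + E x3 u x2 x1 x4 + E x3 x1 x4 u x2 + E x1 x3 x4 u x2 + E x1 u x4 x3 x2 + E x3 u x4 x1 x2) - (E x3 x2 x1 u x4 + E x2 x3 x1 u x4 + E x2 u x1 x3 x4 + E x3 u x1 x2 x4 + E x3 x2 x4 u x1 + E x2 x3 x4 u x1 + E x2 u x4 x3 x1 + E x3 u x4 x2 x1)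
      - (E x4 x1 x2 u x3 + E x1 x4 x2 u x3 + E x1 u x2 x4 x3 + E x4 u x2 x1 x3 + E x4 x1 x3 u x2 + E x1 x4 x3 u x2 + E x1 u x3 x4 x2 + E x4 u x3 x1 x2) + (E x4 x2 x1 u x3 + E x2 x4 x1 u x3 + E x2 u x1 x4 x3 + E x4 u x1 x2 x3 + E x4 x2 x3 u x1 + E x2 x4 x3 u x1 + E x2 u x3 x4 x1 + E x4 u x3 x2 x1))
    = 12 * E u x1 x2 x3 x4 := by
  linear_combination (3 : ℝ) * (h3 x2 u x4 x1 x3) + (-3 : ℝ) * (h1 x2 u x4 x1 x3) + (4 : ℝ) * (h3 x2 u x1 x4 x3) + (5 : ℝ) * (h2 x2 u x3 x1 x4) + (-1 : ℝ) * (h2 u x1 x4 x2 x3) + (-1 : ℝ) * (h1 u x1 x4 x2 x3) + (-1 : ℝ) * (h2 u x2 x3 x4 x1) + (-3 : ℝ) * (h3 u x1 x2 x3 x4) + (3 : ℝ) * (h1 u x1 x3 x2 x4) + (-1 : ℝ) * (h2 u x1 x3 x2 x4) + (5 : ℝ) * (h1 x1 u x2 x4 x3) + (-2 : ℝ) * (h4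 u x1 x2 x4 x3) + (-3 : ℝ) * (h4 u x2 x1 x4 x3) + (1 : ℝ) * (h2 x2 u x3 x4 x1) + (2 : ℝ) * (h3 x1 u x3 x2 x4) + (-5 : ℝ) * (h4 u x1 x2 x3 x4) + (1 : ℝ) * (h4 u x1 x4 x2 x3) + (3 : ℝ) * (h1 x1 u x2 x3 x4) + (-3 : ℝ) * (h1 x2 u x3 x1 x4) + (-1 : ℝ) * (h4 u x3 x4 x1 x2) + (1 : ℝ) * (h4 x1 x4 x2 u x3) + (1 : ℝ) * (h1 x1 u x4 x3 x2) + (1 : ℝ) * (h1 x3 u x4 x1 x2) + (-1 : ℝ) * (h2 x3 u x2 x1 x4) + (1 : ℝ) * (h2 x3 u x1 x2 x4) + (-1 : ℝ) * (h4 x1 x3 x2 u x4) + (3 : ℝ) * (h2 x2 u x1 x3 x4) + (-1 : ℝ) * (h1 x2 u x4 x3 x1) + (1 : ℝ) * (h3 x2 u x3 x4 x1) + (-1 : ℝ) * (h1 x3 u x4 x2 x1) + (-2 : ℝ) * (h3 x2 u x3 x1 x4) + (2 : ℝ) * (h4 u x2 x1 x3 x4) + (-1 : ℝ) * (h4 u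 x2 x4 x1 x3) + (-1 : ℝ) * (h2 x3 u x2 x4 x1) + (-1 : ℝ) * (h4 x1 x3 x4 u x2) + (-1 : ℝ) * (h2 x2 u x1 x4 x3) + (1 : ℝ) * (h2 x1 u x2 x4 x3) + (2 : ℝ) * (h1 u x1 x2 x4 x3) + (1 : ℝ) * (h2 x3 u x1 x4 x2) + (1 : ℝ) * (h1 x1 u x3 x4 x2) + (-1 : ℝ) * (h4 u x1 x3 x4 x2) + (1 : ℝ) * (h4 x2 x3 x4 u x1) + (-5 : ℝ) * (h2 x1 u x3 x2 x4) + (-4 : ℝ) * (h3 x1 u x2 x4 x3) + (-1 : ℝ) * (h1 x2 u x3 x4 x1) + (1 : ℝ) * (h4 u x2 x3 x4 x1) + (1 : ℝ) * (h4 u x3 x4 x2 x1) + (1 : ℝ) * (h2 u x2 x1 x3 x4) + (3 : ℝ) * (h1 x1 u x4 x2 x3) + (3 : ℝ) * (h1 x1 u x3 x2 x4) + (-2 : ℝ) * (h4 u x1 x3 x2 x4) + (-1 : ℝ) * (h3 x1 u x3 x4 x2) + (-1 : ℝ) * (h3 x1 u x2 x3 x4) + (-3 : ℝ) * (h2 x1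 u x2 x3 x4) + (1 : ℝ) * (h3 x2 u x1 x3 x4) + (-3 : ℝ) * (h3 x1 u x4 x2 x3) + (-1 : ℝ) * (h4 x1 x2 x4 u x3) + (2 : ℝ) * (h4 u x2 x3 x1 x4) + (1 : ℝ) * (h4 x1 x2 x3 u x4) + (1 : ℝ) * (h3 u x1 x4 x2 x3) + (1 : ℝ) * (h2 u x1 x3 x4 x2) + (-1 : ℝ) * (h2 x1 u x3 x4 x2) + (-1 : ℝ) * (h2 u x1 x2 x3 x4) + (-3 : ℝ) * (h1 u x1 x2 x3 x4)

private lemma youngId6 {V : Type*} (G : V → V → V → V → V → V → ℝ)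
    (g1 : ∀ a b c d e f, G a b c d e f + G a b d c e f = 0)
    (g2 : ∀ a b c d e f, G a b c d e f = G a b e f c d)
    (g3 : ∀ a b c d e f, G a b c d e f + G a b d e c f + G a b e c d f = 0)
    (g4 : ∀ a b c d e f, G a b c d e f = G b a c d e f)
    (g5 : ∀ a b c d e f, G a b c d e f + G c b d a e f + G d b a c e f = 0)
    (u w x1 x2 x3 x4 : V) :
    ((G x1 x3 u x2 w x4 + G x1 x3 u x4 w x2) - (G x2 x3 u x1 w x4 + G x2 x3 u x4 w x1)
      - (G x1 x4 u x2 w x3 + G x1 x4 u x3 w x2) + (G x2 x4 u x1 w x3 + G x2 x4 u x3 w x1))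
    = 2 * G u w x1 x2 x3 x4 := by
  linear_combination (2 : ℝ) * (g1 x1 x3 u x2 w x4) + (-2 : ℝ) * (g5 u x3 x1 x2 w x4) + (-1 : ℝ) * (g2 u x3 w x4 x1 x2) + (1 : ℝ) * (g1 x1 x3 u x4 w x2) + (-1 : ℝ) * (g1 u x3 w x1 x4 x2) + (1 : ℝ) * (g3 u x3 w x4 x1 x2) + (1 : ℝ) * (g2 u x3 w x2 x4 x1) + (-1 : ℝ) * (g2 x1 x3 u x2 w x4) + (-1 : ℝ) * (g3 x1 x3 u w x4 x2) + (1 : ℝ) * (g4 w x3 u x1 x4 x2) + (-1 : ℝ) * (g1 w x3 u x1 x4 x2) + (1 : ℝ) * (g5 u x3 w x1 x4 x2) + (1 : ℝ) * (g4 w x1 x3 u x4 x2) + (1 : ℝ) * (g5 u w x1 x3 x4 x2) + (-1 : ℝ) * (g1 w x1 u x3 x4 x2) + (-1 : ℝ) * (g2 u w x1 x3 x2 x4) + (-1 : ℝ) * (g1 x2 x3 u x4 w x1) + (1 : ℝ) * (g2 x2 x3 u x1 w x4) + (1 : ℝ) * (g3 x2 x3 u w x4 x1) + (1 : ℝ)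 * (g1 w x3 u x2 x4 x1) + (-1 : ℝ) * (g5 u x3 w x2 x4 x1) + (-1 : ℝ) * (g4 w x3 u x2 x4 x1) + (-1 : ℝ) * (g4 w x2 x3 u x4 x1) + (-1 : ℝ) * (g5 u w x2 x3 x4 x1) + (1 : ℝ) * (g1 w x2 u x3 x4 x1) + (1 : ℝ) * (g4 w x2 u x1 x3 x4) + (1 : ℝ) * (g4 w x1 x2 u x3 x4) + (1 : ℝ) * (g5 u w x1 x2 x3 x4) + (-1 : ℝ) * (g1 w x1 u x2 x3 x4) + (-2 : ℝ) * (g1 x1 x4 u x2 w x3) + (2 : ℝ) * (g5 u x4 x1 x2 w x3) + (1 : ℝ) * (g2 u x4 w x3 x1 x2) + (-1 : ℝ) * (g1 x1 x4 u x3 w x2) + (-1 : ℝ) * (g2 u x2 w x4 x1 x3) + (-1 : ℝ) * (g3 u x2 w x1 x3 x4) + (1 : ℝ) * (g5 w u x1 x4 x2 x3) + (1 : ℝ) * (g4 u w x1 x4 x2 x3) + (1 : ℝ) * (g4 u x1 x4 w x2 x3) + (1 : ℝ) * (g4 u x4 w x1 x2 x3) + (-1 : ℝ) * (g3 u x4 w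 x1 x2 x3) + (1 : ℝ) * (g1 u x4 w x2 x1 x3) + (-1 : ℝ) * (g2 u w x1 x4 x2 x3) + (1 : ℝ) * (g1 u x2 w x4 x1 x3) + (1 : ℝ) * (g2 x1 x4 u x2 w x3) + (1 : ℝ) * (g3 x1 x4 u w x3 x2) + (1 : ℝ) * (g1 w x4 u x1 x3 x2) + (-1 : ℝ) * (g5 u x4 w x1 x3 x2) + (1 : ℝ) * (g3 w x1 u x3 x4 x2) + (-1 : ℝ) * (g4 w x1 x4 u x3 x2) + (-1 : ℝ) * (g5 u w x1 x4 x3 x2) + (1 : ℝ) * (g1 u w x1 x4 x3 x2) + (-1 : ℝ) * (g3 u w x1 x3 x4 x2) + (-1 : ℝ) * (g2 u w x1 x2 x3 x4) + (-1 : ℝ) * (g4 w x4 u x1 x3 x2) + (1 : ℝ) * (g2 w x1 u x2 x3 x4) + (1 : ℝ) * (g1 x2 x4 u x3 w x1) + (-1 : ℝ) * (g2 x2 x4 u x1 w x3) + (-1 : ℝ) * (g3 x2 x4 u w x3 x1) + (-1 : ℝ) * (g1 w x4 u x2 x3 x1) + (1 : ℝ) * (g5 u x4 w x2 x3 x1)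 + (1 : ℝ) * (g4 w x4 u x2 x3 x1) + (-1 : ℝ) * (g3 w x2 u x3 x4 x1) + (-1 : ℝ) * (g2 w x2 u x1 x3 x4) + (1 : ℝ) * (g4 w x2 x4 u x3 x1) + (1 : ℝ) * (g5 u w x2 x4 x3 x1) + (-1 : ℝ) * (g1 u w x2 x4 x3 x1) + (1 : ℝ) * (g3 u w x2 x3 x4 x1) + (1 : ℝ) * (g2 u w x2 x1 x3 x4) + (-1 : ℝ) * (g1 u w x1 x2 x3 x4) + (1 : ℝ) * (g1 u x4 w x1 x3 x2) + (-1 : ℝ) * (g3 u x4 w x3 x1 x2) + (-1 : ℝ) * (g2 u x4 w x2 x3 x1) + (-1 : ℝ) * (g5 w u x2 x4 x1 x3) + (-1 : ℝ) * (g4 u w x2 x4 x1 x3) + (-1 : ℝ) * (g4 u x2 x4 w x1 x3) + (-1 : ℝ) * (g4 u x4 w x2 x1 x3) + (1 : ℝ) * (g5 w u x2 x3 x1 x4) + (1 : ℝ) * (g4 u w x2 x3 x1 x4) + (1 : ℝ) * (g4 u x2 x3 w x1 x4) + (1 : ℝ) * (g4 u x3 w x2 x1 x4) + (-1 : ℝ)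 * (g5 w u x1 x3 x2 x4) + (-1 : ℝ) * (g4 u w x1 x3 x2 x4) + (-1 : ℝ) * (g4 u x1 x3 w x2 x4) + (-1 : ℝ) * (g4 u x3 w x1 x2 x4) + (1 : ℝ) * (g5 w u x1 x2 x3 x4) + (1 : ℝ) * (g4 u w x1 x2 x3 x4) + (1 : ℝ) * (g4 u x1 x2 w x3 x4) + (1 : ℝ) * (g3 u x1 w x2 x3 x4) + (-1 : ℝ) * (g1 u x1 w x2 x3 x4) + (1 : ℝ) * (g4 u x2 w x1 x3 x4) + (-1 : ℝ) * (g1 u x1 w x4 x2 x3) + (1 : ℝ) * (g2 u x1 w x4 x2 x3) + (1 : ℝ) * (g3 u x3 w x1 x2 x4) + (-1 : ℝ) * (g1 u x3 w x2 x1 x4) + (-2 : ℝ) * (g3 u w x1 x2 x3 x4) + (2 : ℝ) * (g1 u w x1 x3 x2 x4)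
private lemma sum_split {M : Type*} [AddCommMonoid M] (k : ℕ) (c : Fin (k+2) → Fin (k+1) → M) :
    ∑ p, ∑ q, c p q =
      ((c 0 0 + ∑ m : Fin k, c 0 m.succ) +
      ((c 1 0 + ∑ m : Fin k, c 1 m.succ) +
        ∑ j : Fin k, (c j.succ.succ 0 + (c j.succ.succ j.succ +
          ∑ m ∈ Finset.univ.erase j, c j.succ.succ m.succ)))) := by
  rw [Fin.sum_univ_succ (f := fun p => ∑ q, c p q),
    Fin.sum_univ_succ (f := fun p : Fin (k+1) => ∑ q, c p.succ q), Fin.succ_zero_eq_one]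
  congr 1
  · exact Fin.sum_univ_succ _
  congr 1
  · exact Fin.sum_univ_succ _
  refine Finset.sum_congr rfl fun j _ => ?_
  rw [Fin.sum_univ_succ]
  congr 1
  exact (Finset.add_sum_erase _ _ (Finset.mem_univ j)).symm

private noncomputable def pr {V : Type*} [NormedAddCommGroup V] [InnerProductSpace ℝ V] {k : ℕ}
    (D : MultilinearMap ℝ (fun _ : Fin k => V) (Curv V)) (z : Fin k → V) (a b c d : V) : ℝ :=
  D z a b c d + D z a d c b


private lemma rowK_eq {V : Type*} [NormedAddCommGroup V] [InnerProductSpace ℝ V]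
    (k : ℕ) (D : MultilinearMap ℝ (fun _ : Fin k => V) (Curv V))
    (hsym : ∀ (y : Fin k → V) (σ : Equiv.Perm (Fin k)) (x₁ x₂ x₃ x₄ : V),
      D (y ∘ σ) x₁ x₂ x₃ x₄ = D y x₁ x₂ x₃ x₄)
    (y : Fin k → V) (x₁ x₂ x₃ x₄ : V) :
    rowK k (fun y' z₁ z₂ z₃ z₄ => D y' z₁ z₂ z₃ z₄) y x₁ x₂ x₃ x₄ =
      (Nat.factorial k : ℝ) *
      ((pr D y x₁ x₂ x₃ x₄ + ∑ m : Fin k, pr D (Function.update y m x₃) x₁ x₂ (y m) x₄) +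
       ((pr D y x₃ x₂ x₁ x₄ + ∑ m : Fin k, pr D (Function.update y m x₁) x₃ x₂ (y m) x₄) +
        ∑ j : Fin k, (pr D (Function.update y j x₁) (y j) x₂ x₃ x₄ +
          (pr D (Function.update y j x₃) (y j) x₂ x₁ x₄ +
           ∑ m ∈ Finset.univ.erase j,
             pr D (Function.update (Function.update y j x₁) m x₃) (y j) x₂ (y m) x₄)))) := by
  simp only [rowK]
  set v : Fin (k+2) → V := Fin.cons x₁ (Fin.cons x₃ y) with hv
  rw [← Equiv.sum_comp (Equiv.Perm.decomposeFin.symm), Fintype.sum_prod_type]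
  conv_lhs =>
    enter [2, p]
    rw [← Equiv.sum_comp (Equiv.Perm.decomposeFin.symm), Fintype.sum_prod_type]
  simp only [show ∀ (i : Fin k) (h : (i:ℕ)+2 < k+2), (⟨(i:ℕ)+2, h⟩ : Fin (k+2)) = i.succ.succ from fun _ _ => rfl,
    show ∀ (h : 0 < k+2), (⟨0, h⟩ : Fin (k+2)) = 0 from fun _ => rfl,
    show ∀ (h : 1 < k+2), (⟨1, h⟩ : Fin (k+2)) = 1 from fun _ => rfl,
    Equiv.Perm.decomposeFin_symm_apply_zero, Equiv.Perm.decomposeFin_symm_apply_one,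
    Equiv.Perm.decomposeFin_symm_apply_succ]
  have h10 : (1 : Fin (k+2)) ≠ 0 := by
    rw [← Fin.succ_zero_eq_one]; exact Fin.succ_ne_zero _
  have hne1 : ∀ i : Fin k, (i.succ.succ : Fin (k+2)) ≠ 1 := fun i h =>
    (Fin.succ_ne_zero i) (Fin.succ_inj.mp (by rwa [← Fin.succ_zero_eq_one] at h))
  have hne2 : ∀ i j : Fin k, i ≠ j → (i.succ.succ : Fin (k+2)) ≠ j.succ.succ :=
    fun i j h hh => h (Fin.succ_inj.mp (Fin.succ_inj.mp hh))
  have hv0 : v 0 = x₁ := rfl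
  have hv1 : v 1 = x₃ := by
    rw [hv, ← Fin.succ_zero_eq_one, Fin.cons_succ, Fin.cons_zero]
  have hvs : ∀ i : Fin k, v i.succ.succ = y i := fun i => by
    rw [hv, Fin.cons_succ, Fin.cons_succ]
  have hτ : ∀ (p : Fin (k+2)) (q : Fin (k+1)),
      (∑ τ : Equiv.Perm (Fin k),
        (D (fun i => v (Equiv.swap 0 p ((Equiv.swap 0 q (τ i).succ).succ))) (v p) x₂
            (v (Equiv.swap 0 p q.succ)) x₄
         + D (fun i => v (Equiv.swap 0 p ((Equiv.swap 0 q (τ i).succ).succ))) (v p) x₄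
            (v (Equiv.swap 0 p q.succ)) x₂))
      = (Nat.factorial k : ℝ) * pr D (fun i => v (Equiv.swap 0 p ((Equiv.swap 0 q i.succ).succ)))
          (v p) x₂ (v (Equiv.swap 0 p q.succ)) x₄ := by
    intro p q
    have e : ∀ τ : Equiv.Perm (Fin k),
        (D (fun i => v (Equiv.swap 0 p ((Equiv.swap 0 q (τ i).succ).succ))) (v p) x₂
            (v (Equiv.swap 0 p q.succ)) x₄
         + D (fun i => v (Equiv.swap 0 p ((Equiv.swap 0 q (τ i).succ).succ))) (v p) x₄
            (v (Equiv.swap 0 p q.succ)) x₂)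
        = pr D (fun i => v (Equiv.swap 0 p ((Equiv.swap 0 q i.succ).succ)))
            (v p) x₂ (v (Equiv.swap 0 p q.succ)) x₄ := by
      intro τ
      have h1 := hsym (fun i => v (Equiv.swap 0 p ((Equiv.swap 0 q i.succ).succ))) τ (v p) x₂
        (v (Equiv.swap 0 p q.succ)) x₄
      have h2 := hsym (fun i => v (Equiv.swap 0 p ((Equiv.swap 0 q i.succ).succ))) τ (v p) x₄
        (v (Equiv.swap 0 p q.succ)) x₂
      exact congrArg₂ (· + ·) h1 h2
    rw [Finset.sum_congr rfl fun τ _ => e τ, Finset.sum_const, Finset.card_univ,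
      Fintype.card_perm, Fintype.card_fin, nsmul_eq_mul]
  simp only [hτ]
  simp only [← Finset.mul_sum]
  congr 1
  refine (sum_split k _).trans ?_
  have hb00 : (fun i : Fin k =>
      v (Equiv.swap 0 (0:Fin (k+2)) ((Equiv.swap 0 (0:Fin (k+1)) i.succ).succ))) = y := by
    funext i
    rw [Equiv.swap_self, Equiv.swap_self]; simp only [Equiv.refl_apply]; exact hvs i
  have hb0m : ∀ m : Fin k, (fun i : Fin k =>
      v (Equiv.swap 0 (0:Fin (k+2)) ((Equiv.swap 0 m.succ i.succ).succ)))
      = Function.update y m x₃ := by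
    intro m; funext i
    rw [Equiv.swap_self]; simp only [Equiv.refl_apply]
    rcases eq_or_ne i m with rfl | h
    · rw [Equiv.swap_apply_right, Fin.succ_zero_eq_one, Function.update_self]; exact hv1
    · rw [Equiv.swap_apply_of_ne_of_ne (Fin.succ_ne_zero i) (fun hh => h (Fin.succ_inj.mp hh)),
        Function.update_of_ne h]
      exact hvs i
  have hb10 : (fun i : Fin k =>
      v (Equiv.swap 0 (1:Fin (k+2)) ((Equiv.swap 0 (0:Fin (k+1)) i.succ).succ))) = y := by
    funext i
    rw [Equiv.swap_self]; simp only [Equiv.refl_apply]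
    rw [Equiv.swap_apply_of_ne_of_ne (Fin.succ_ne_zero _) (hne1 i)]
    exact hvs i
  have hb1m : ∀ m : Fin k, (fun i : Fin k =>
      v (Equiv.swap 0 (1:Fin (k+2)) ((Equiv.swap 0 m.succ i.succ).succ)))
      = Function.update y m x₁ := by
    intro m; funext i
    rcases eq_or_ne i m with rfl | h
    · rw [Equiv.swap_apply_right, Fin.succ_zero_eq_one, Equiv.swap_apply_right,
        Function.update_self]
      exact hv0
    · rw [Equiv.swap_apply_of_ne_of_ne (Fin.succ_ne_zero i) (fun hh => h (Fin.succ_inj.mp hh)),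
        Equiv.swap_apply_of_ne_of_ne (Fin.succ_ne_zero _) (hne1 i), Function.update_of_ne h]
      exact hvs i
  have hbj0 : ∀ j : Fin k, (fun i : Fin k =>
      v (Equiv.swap 0 j.succ.succ ((Equiv.swap 0 (0:Fin (k+1)) i.succ).succ)))
      = Function.update y j x₁ := by
    intro j; funext i
    rw [Equiv.swap_self]; simp only [Equiv.refl_apply]
    rcases eq_or_ne i j with rfl | h
    · rw [Equiv.swap_apply_right, Function.update_self]; exact hv0
    · rw [Equiv.swap_apply_of_ne_of_ne (Fin.succ_ne_zero _) (hne2 i j h),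
        Function.update_of_ne h]
      exact hvs i
  have hbjm : ∀ j m : Fin k, (fun i : Fin k =>
      v (Equiv.swap 0 j.succ.succ ((Equiv.swap 0 m.succ i.succ).succ)))
      = Function.update (Function.update y j x₁) m x₃ := by
    intro j m; funext i
    rcases eq_or_ne i m with rfl | h
    · rw [Equiv.swap_apply_right, Fin.succ_zero_eq_one,
        Equiv.swap_apply_of_ne_of_ne h10 (hne1 j).symm, Function.update_self]
      exact hv1
    · rw [Equiv.swap_apply_of_ne_of_ne (Fin.succ_ne_zero i) (fun hh => h (Fin.succ_inj.mp hh)),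
        Function.update_of_ne h]
      rcases eq_or_ne i j with rfl | h2
      · rw [Equiv.swap_apply_right, Function.update_self]; exact hv0
      · rw [Equiv.swap_apply_of_ne_of_ne (Fin.succ_ne_zero _) (hne2 i j h2),
          Function.update_of_ne h2]
        exact hvs i
  have hbjj : ∀ j : Fin k, (fun i : Fin k =>
      v (Equiv.swap 0 j.succ.succ ((Equiv.swap 0 j.succ i.succ).succ)))
      = Function.update y j x₃ := fun j => by rw [hbjm j j, Function.update_idem]
  have hw00 : v (Equiv.swap 0 (0:Fin (k+2)) (Fin.succ (0:Fin (k+1)))) = x₃ := by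
    rw [Equiv.swap_self]; simp only [Equiv.refl_apply]; rw [Fin.succ_zero_eq_one]; exact hv1
  have hw0m : ∀ m : Fin k, v (Equiv.swap 0 (0:Fin (k+2)) m.succ.succ) = y m := fun m => by
    rw [Equiv.swap_self]; simp only [Equiv.refl_apply]; exact hvs m
  have hw10 : v (Equiv.swap 0 (1:Fin (k+2)) (Fin.succ (0:Fin (k+1)))) = x₁ := by
    rw [Fin.succ_zero_eq_one, Equiv.swap_apply_right]; exact hv0
  have hw1m : ∀ m : Fin k, v (Equiv.swap 0 (1:Fin (k+2)) m.succ.succ) = y m := fun m => by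
    rw [Equiv.swap_apply_of_ne_of_ne (Fin.succ_ne_zero _) (hne1 m)]; exact hvs m
  have hwj0 : ∀ j : Fin k, v (Equiv.swap 0 j.succ.succ (Fin.succ (0:Fin (k+1)))) = x₃ :=
    fun j => by
    rw [Fin.succ_zero_eq_one, Equiv.swap_apply_of_ne_of_ne h10 (hne1 j).symm]; exact hv1
  have hwjj : ∀ j : Fin k, v (Equiv.swap 0 j.succ.succ j.succ.succ) = x₁ := fun j => by
    rw [Equiv.swap_apply_right]; exact hv0
  have hwjm : ∀ j m : Fin k, m ≠ j → v (Equiv.swap 0 j.succ.succ m.succ.succ) = y m :=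
    fun j m h => by
    rw [Equiv.swap_apply_of_ne_of_ne (Fin.succ_ne_zero _) (hne2 m j h)]; exact hvs m
  simp only [hb00, hb0m, hb10, hb1m, hbj0, hbjj, hbjm, hv0, hv1, hvs, hw00, hw0m, hw10,
    hw1m, hwj0, hwjj]
  refine congrArg₂ (· + ·) rfl (congrArg₂ (· + ·) rfl (Finset.sum_congr rfl fun j _ =>
    congrArg₂ (· + ·) rfl (congrArg₂ (· + ·) rfl (Finset.sum_congr rfl fun m hm => ?_))))
  rw [hwjm j m (Finset.mem_erase.mp hm).1]

private lemma bianchi2_at {V : Type*} [NormedAddCommGroup V] [InnerProductSpace ℝ V]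
    (k : ℕ) (D : MultilinearMap ℝ (fun _ : Fin k => V) (Curv V))
    (hsym : ∀ (y : Fin k → V) (σ : Equiv.Perm (Fin k)) (x₁ x₂ x₃ x₄ : V),
      D (y ∘ σ) x₁ x₂ x₃ x₄ = D y x₁ x₂ x₃ x₄)
    (hB2 : ∀ (hk : 0 < k) (y : Fin k → V) (x₁ x₂ x₃ x₄ : V),
      D y x₁ x₂ x₃ x₄
        + D (Function.update y ⟨k - 1, Nat.sub_lt hk Nat.one_pos⟩ x₁) x₂
            (y ⟨k - 1, Nat.sub_lt hk Nat.one_pos⟩) x₃ x₄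
        + D (Function.update y ⟨k - 1, Nat.sub_lt hk Nat.one_pos⟩ x₂)
            (y ⟨k - 1, Nat.sub_lt hk Nat.one_pos⟩) x₁ x₃ x₄ = 0) :
    ∀ (p : Fin k) (z : Fin k → V) (a b c d : V),
      D z a b c d + D (Function.update z p a) b (z p) c d
        + D (Function.update z p b) (z p) a c d = 0 := by
  intro p z a b c d
  have hk : 0 < k := p.pos
  have key : ∀ w : V,
      Function.update (z ∘ ⇑(Equiv.swap p ⟨k - 1, Nat.sub_lt hk Nat.one_pos⟩))
        ⟨k - 1, Nat.sub_lt hk Nat.one_pos⟩ w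
      = (Function.update z p w) ∘ ⇑(Equiv.swap p ⟨k - 1, Nat.sub_lt hk Nat.one_pos⟩) := by
    intro w
    rw [Function.update_comp_equiv, Equiv.symm_swap, Equiv.swap_apply_left]
  have hzL : (z ∘ ⇑(Equiv.swap p ⟨k - 1, Nat.sub_lt hk Nat.one_pos⟩))
      ⟨k - 1, Nat.sub_lt hk Nat.one_pos⟩ = z p := by
    simp only [Function.comp_apply]
    rw [Equiv.swap_apply_right]
  have h := hB2 hk (z ∘ ⇑(Equiv.swap p ⟨k - 1, Nat.sub_lt hk Nat.one_pos⟩)) a b c d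
  rw [key, key, hzL, hsym z _, hsym (Function.update z p a) _,
    hsym (Function.update z p b) _] at h
  exact h

set_option maxHeartbeats 4000000 in
/-- The Young symmetrizer of the tableau with rows `{1,3,5,…,k+4}`, `{2,4}`
and columns `{1,2}`, `{3,4}` acts on elements of `C_k` as the scalar `2(k+3)(k+2)·k!`. -/
theorem youngK_eigenvalue
    {V : Type*} [NormedAddCommGroup V] [InnerProductSpace ℝ V]
    (k : ℕ) (D : MultilinearMap ℝ (fun _ : Fin k => V) (Curv V))
    (hsym : ∀ (y : Fin k → V) (σ : Equiv.Perm (Fin k)) (x₁ x₂ x₃ x₄ : V),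
      D (y ∘ σ) x₁ x₂ x₃ x₄ = D y x₁ x₂ x₃ x₄)
    (hcurv : ∀ y : Fin k → V, IsCurv (D y))
    (hB2 : ∀ (hk : 0 < k) (y : Fin k → V) (x₁ x₂ x₃ x₄ : V),
      D y x₁ x₂ x₃ x₄
        + D (Function.update y ⟨k - 1, Nat.sub_lt hk Nat.one_pos⟩ x₁) x₂
            (y ⟨k - 1, Nat.sub_lt hk Nat.one_pos⟩) x₃ x₄
        + D (Function.update y ⟨k - 1, Nat.sub_lt hk Nat.one_pos⟩ x₂)
            (y ⟨k - 1, Nat.sub_lt hk Nat.one_pos⟩) x₁ x₃ x₄ = 0) :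
    ∀ (y : Fin k → V) (x₁ x₂ x₃ x₄ : V),
      youngK k (fun y' z₁ z₂ z₃ z₄ => D y' z₁ z₂ z₃ z₄) y x₁ x₂ x₃ x₄ =
        (2 * ((k : ℝ) + 3) * ((k : ℝ) + 2) * (Nat.factorial k : ℝ)) * D y x₁ x₂ x₃ x₄ := by
  intro y x₁ x₂ x₃ x₄
  have hB2' := bianchi2_at k D hsym hB2
  have c1 : ∀ (z : Fin k → V) (a b c d : V), D z a b c d + D z b a c d = 0 := by
    intro z a b c d
    rw [(hcurv z).1 a b c d]; ring
  have c2 : ∀ (z : Fin k → V) (a b c d : V), D z a b c d = D z c d a b :=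
    fun z => (hcurv z).2.1
  have c3 : ∀ (z : Fin k → V) (a b c d : V),
      D z a b c d + D z b c a d + D z c a b d = 0 := fun z => (hcurv z).2.2
  have hA : ((D y x₁ x₂ x₃ x₄ + D y x₃ x₂ x₁ x₄ + D y x₁ x₄ x₃ x₂ + D y x₃ x₄ x₁ x₂) - (D y x₂ x₁ x₃ x₄ + D y x₃ x₁ x₂ x₄ + D y x₂ x₄ x₃ x₁ + D y x₃ x₄ x₂ x₁)
        - (D y x₁ x₂ x₄ x₃ + D y x₄ x₂ x₁ x₃ + D y x₁ x₃ x₄ x₂ + D y x₄ x₃ x₁ x₂) + (D y x₂ x₁ x₄ x₃ + D y x₄ x₁ x₂ x₃ + D y x₂ x₃ x₄ x₁ + D y x₄ x₃ x₂ x₁))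
      = 12 * D y x₁ x₂ x₃ x₄ :=
    youngId4 (fun a b c d => D y a b c d) (fun a b c d => c1 y a b c d)
      (fun a b c d => c2 y a b c d) (fun a b c d => c3 y a b c d) x₁ x₂ x₃ x₄
  have hM : ∀ m : Fin k, ((D (Function.update y m x₃) x₁ x₂ (y m) x₄ + D (Function.update y m x₁) x₃ x₂ (y m) x₄ + D (Function.update y m x₁) (y m) x₂ x₃ x₄ + D (Function.update y m x₃) (y m) x₂ x₁ x₄ + D (Function.update y m x₃) x₁ x₄ (y m) x₂ + D (Function.update y m x₁) x₃ x₄ (y m) x₂ + D (Function.update y m x₁) (y m) x₄ x₃ x₂ + D (Function.update y m x₃) (y m) x₄ x₁ x₂) - (D (Function.update y m x₃) x₂ x₁ (y m) x₄ + D (Function.update y m x₂) x₃ x₁ (y m) x₄ + D (Function.update y m x₂) (y m) x₁ x₃ x₄ + D (Function.update y m x₃) (y m) x₁ x₂ x₄ + D (Function.update y m x₃) x₂ x₄ (y m) x₁ + D (Function.update y m x₂) x₃ x₄ (y m) x₁ + D (Function.update y m x₂) (y m) x₄ x₃ x₁ + D (Function.update y m x₃) (y m) x₄ x₂ x₁)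
        - (D (Function.update y m x₄) x₁ x₂ (y m) x₃ + D (Function.update y m x₁) x₄ x₂ (y m) x₃ + D (Function.update y m x₁) (y m) x₂ x₄ x₃ + D (Function.update y m x₄) (y m) x₂ x₁ x₃ + D (Function.update y m x₄) x₁ x₃ (y m) x₂ + D (Function.update y m x₁) x₄ x₃ (y m) x₂ + D (Function.update y m x₁) (y m) x₃ x₄ x₂ + D (Function.update y m x₄) (y m) x₃ x₁ x₂) + (D (Function.update y m x₄) x₂ x₁ (y m) x₃ + D (Function.update y m x₂) x₄ x₁ (y m) x₃ + D (Function.update y m x₂) (y m) x₁ x₄ x₃ + D (Function.update y m x₄) (y m) x₁ x₂ x₃ + D (Function.update y m x₄) x₂ x₃ (y m) x₁ + D (Function.update y m x₂) x₄ x₃ (y m) x₁ + D (Function.update y m x₂) (y m) x₃ x₄ x₁ + D (Function.update y m x₄) (y m) x₃ x₂ x₁))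
      = 12 * D y x₁ x₂ x₃ x₄ := by
    intro m
    have h : ((D (Function.update y m x₃) x₁ x₂ (y m) x₄ + D (Function.update y m x₁) x₃ x₂ (y m) x₄ + D (Function.update y m x₁) (y m) x₂ x₃ x₄ + D (Function.update y m x₃) (y m) x₂ x₁ x₄ + D (Function.update y m x₃) x₁ x₄ (y m) x₂ + D (Function.update y m x₁) x₃ x₄ (y m) x₂ + D (Function.update y m x₁) (y m) x₄ x₃ x₂ + D (Function.update y m x₃) (y m) x₄ x₁ x₂) - (D (Function.update y m x₃) x₂ x₁ (y m) x₄ + D (Function.update y m x₂) x₃ x₁ (y m) x₄ + D (Function.update y m x₂) (y m) x₁ x₃ x₄ + D (Function.update y m x₃) (y m) x₁ x₂ x₄ + D (Function.update y m x₃) x₂ x₄ (y m) x₁ + D (Function.update y m x₂) x₃ x₄ (y m) x₁ + D (Function.update y m x₂) (y m) x₄ x₃ x₁ + D (Function.update y m x₃) (y m) x₄ x₂ x₁)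
        - (D (Function.update y m x₄) x₁ x₂ (y m) x₃ + D (Function.update y m x₁) x₄ x₂ (y m) x₃ + D (Function.update y m x₁) (y m) x₂ x₄ x₃ + D (Function.update y m x₄) (y m) x₂ x₁ x₃ + D (Function.update y m x₄) x₁ x₃ (y m) x₂ + D (Function.update y m x₁) x₄ x₃ (y m) x₂ + D (Function.update y m x₁) (y m) x₃ x₄ x₂ + D (Function.update y m x₄) (y m) x₃ x₁ x₂) + (D (Function.update y m x₄) x₂ x₁ (y m) x₃ + D (Function.update y m x₂) x₄ x₁ (y m) x₃ + D (Function.update y m x₂) (y m) x₁ x₄ x₃ + D (Function.update y m x₄) (y m) x₁ x₂ x₃ + D (Function.update y m x₄) x₂ x₃ (y m) x₁ + D (Function.update y m x₂) x₄ x₃ (y m) x₁ + D (Function.update y m x₂) (y m) x₃ x₄ x₁ + D (Function.update y m x₄) (y m) x₃ x₂ x₁))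
        = 12 * D (Function.update y m (y m)) x₁ x₂ x₃ x₄ :=
      youngId5 (fun a b c d e => D (Function.update y m a) b c d e)
        (fun a b c d e => c1 _ b c d e) (fun a b c d e => c2 _ b c d e)
        (fun a b c d e => c3 _ b c d e)
        (fun a b c d e => by
          simpa only [Function.update_idem, Function.update_self] using
            hB2' m (Function.update y m a) b c d e)
        (y m) x₁ x₂ x₃ x₄
    rwa [Function.update_eq_self] at h
  have hG : ∀ j m : Fin k, m ≠ j → ((D (Function.update (Function.update y j x₁) m x₃) (y j) x₂ (y m) x₄ + D (Function.update (Function.update y j x₁) m x₃) (y j) x₄ (y m) x₂) - (D (Function.update (Function.update y j x₂) m x₃) (y j) x₁ (y m) x₄ + D (Function.update (Function.update y j x₂) m x₃) (y j) x₄ (y m) x₁)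
        - (D (Function.update (Function.update y j x₁) m x₄) (y j) x₂ (y m) x₃ + D (Function.update (Function.update y j x₁) m x₄) (y j) x₃ (y m) x₂) + (D (Function.update (Function.update y j x₂) m x₄) (y j) x₁ (y m) x₃ + D (Function.update (Function.update y j x₂) m x₄) (y j) x₃ (y m) x₁))
      = 2 * D y x₁ x₂ x₃ x₄ := by
    intro j m hne
    have h : ((D (Function.update (Function.update y j x₁) m x₃) (y j) x₂ (y m) x₄ + D (Function.update (Function.update y j x₁) m x₃) (y j) x₄ (y m) x₂) - (D (Function.update (Function.update y j x₂) m x₃) (y j) x₁ (y m) x₄ + D (Function.update (Function.update y j x₂) m x₃) (y j) x₄ (y m) x₁)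
        - (D (Function.update (Function.update y j x₁) m x₄) (y j) x₂ (y m) x₃ + D (Function.update (Function.update y j x₁) m x₄) (y j) x₃ (y m) x₂) + (D (Function.update (Function.update y j x₂) m x₄) (y j) x₁ (y m) x₃ + D (Function.update (Function.update y j x₂) m x₄) (y j) x₃ (y m) x₁))
        = 2 * D (Function.update (Function.update y j (y j)) m (y m)) x₁ x₂ x₃ x₄ :=
      youngId6 (fun a b c d e f => D (Function.update (Function.update y j a) m b) c d e f)
        (fun a b c d e f => c1 _ c d e f) (fun a b c d e f => c2 _ c d e f)
        (fun a b c d e f => c3 _ c d e f)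
        (fun a b c d e f => by
          have hcomp : (Function.update (Function.update y j a) m b) ∘ ⇑(Equiv.swap j m)
              = Function.update (Function.update y j b) m a := by
            funext i
            rcases eq_or_ne i j with rfl | hij
            · rw [Function.comp_apply, Equiv.swap_apply_left, Function.update_self,
                Function.update_of_ne (Ne.symm hne), Function.update_self]
            · rcases eq_or_ne i m with rfl | him
              · rw [Function.comp_apply, Equiv.swap_apply_right,
                  Function.update_of_ne (Ne.symm hne), Function.update_self,
                  Function.update_self]
              · rw [Function.comp_apply, Equiv.swap_apply_of_ne_of_ne hij him,
                  Function.update_of_ne him, Function.update_of_ne hij,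
                  Function.update_of_ne him, Function.update_of_ne hij]
          calc D (Function.update (Function.update y j a) m b) c d e f
              = D ((Function.update (Function.update y j a) m b) ∘ ⇑(Equiv.swap j m))
                  c d e f := (hsym _ (Equiv.swap j m) c d e f).symm
            _ = D (Function.update (Function.update y j b) m a) c d e f := by rw [hcomp]
        )
        (fun a b c d e f => by
          have hh := hB2' j (Function.update (Function.update y j a) m b) c d e f
          simpa only [Function.update_comm hne, Function.update_idem,
            Function.update_of_ne (Ne.symm hne), Function.update_self] using hh)
        (y j) (y m) x₁ x₂ x₃ x₄
    rwa [Function.update_eq_self, Function.update_eq_self] at h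
  have hMsum : (∑ m : Fin k, ((D (Function.update y m x₃) x₁ x₂ (y m) x₄ + D (Function.update y m x₁) x₃ x₂ (y m) x₄ + D (Function.update y m x₁) (y m) x₂ x₃ x₄ + D (Function.update y m x₃) (y m) x₂ x₁ x₄ + D (Function.update y m x₃) x₁ x₄ (y m) x₂ + D (Function.update y m x₁) x₃ x₄ (y m) x₂ + D (Function.update y m x₁) (y m) x₄ x₃ x₂ + D (Function.update y m x₃) (y m) x₄ x₁ x₂) - (D (Function.update y m x₃) x₂ x₁ (y m) x₄ + D (Function.update y m x₂) x₃ x₁ (y m) x₄ + D (Function.update y m x₂) (y m) x₁ x₃ x₄ + D (Function.update y m x₃) (y m) x₁ x₂ x₄ + D (Function.update y m x₃) x₂ x₄ (y m) x₁ + D (Function.update y m x₂) x₃ x₄ (y m) x₁ + D (Function.update y m x₂) (y m) x₄ x₃ x₁ + D (Function.update y m x₃) (y m) x₄ x₂ x₁)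
        - (D (Function.update y m x₄) x₁ x₂ (y m) x₃ + D (Function.update y m x₁) x₄ x₂ (y m) x₃ + D (Function.update y m x₁) (y m) x₂ x₄ x₃ + D (Function.update y m x₄) (y m) x₂ x₁ x₃ + D (Function.update y m x₄) x₁ x₃ (y m) x₂ + D (Function.update y m x₁) x₄ x₃ (y m) x₂ + D (Function.update y m x₁) (y m) x₃ x₄ x₂ + D (Function.update y m x₄) (y m) x₃ x₁ x₂) + (D (Function.update y m x₄) x₂ x₁ (y m) x₃ + D (Function.update y m x₂) x₄ x₁ (y m) x₃ + D (Function.update y m x₂) (y m) x₁ x₄ x₃ + D (Function.update y m x₄) (y m) x₁ x₂ x₃ + D (Function.update y m x₄) x₂ x₃ (y m) x₁ + D (Function.update y m x₂) x₄ x₃ (y m) x₁ + D (Function.update y m x₂) (y m) x₃ x₄ x₁ + D (Function.update y m x₄) (y m) x₃ x₂ x₁)))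
      = (k : ℝ) * (12 * D y x₁ x₂ x₃ x₄) := by
    refine (Finset.sum_congr rfl fun m _ => hM m).trans ?_
    rw [Finset.sum_const, Finset.card_univ, Fintype.card_fin, nsmul_eq_mul]
  have hGsum : (∑ j : Fin k, ∑ m ∈ Finset.univ.erase j, ((D (Function.update (Function.update y j x₁) m x₃) (y j) x₂ (y m) x₄ + D (Function.update (Function.update y j x₁) m x₃) (y j) x₄ (y m) x₂) - (D (Function.update (Function.update y j x₂) m x₃) (y j) x₁ (y m) x₄ + D (Function.update (Function.update y j x₂) m x₃) (y j) x₄ (y m) x₁)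
        - (D (Function.update (Function.update y j x₁) m x₄) (y j) x₂ (y m) x₃ + D (Function.update (Function.update y j x₁) m x₄) (y j) x₃ (y m) x₂) + (D (Function.update (Function.update y j x₂) m x₄) (y j) x₁ (y m) x₃ + D (Function.update (Function.update y j x₂) m x₄) (y j) x₃ (y m) x₁)))
      = (k : ℝ) * (((k - 1 : ℕ) : ℝ) * (2 * D y x₁ x₂ x₃ x₄)) := by
    have inner : ∀ j : Fin k, (∑ m ∈ Finset.univ.erase j, ((D (Function.update (Function.update y j x₁) m x₃) (y j) x₂ (y m) x₄ + D (Function.update (Function.update y j x₁) m x₃) (y j) x₄ (y m) x₂) - (D (Function.update (Function.update y j x₂) m x₃) (y j) x₁ (y m) x₄ + D (Function.update (Function.update y j x₂) m x₃) (y j) x₄ (y m) x₁)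
        - (D (Function.update (Function.update y j x₁) m x₄) (y j) x₂ (y m) x₃ + D (Function.update (Function.update y j x₁) m x₄) (y j) x₃ (y m) x₂) + (D (Function.update (Function.update y j x₂) m x₄) (y j) x₁ (y m) x₃ + D (Function.update (Function.update y j x₂) m x₄) (y j) x₃ (y m) x₁)))
        = ((k - 1 : ℕ) : ℝ) * (2 * D y x₁ x₂ x₃ x₄) := by
      intro j
      refine (Finset.sum_congr rfl fun m hm => hG j m (Finset.mem_erase.mp hm).1).trans ?_
      rw [Finset.sum_const, Finset.card_erase_of_mem (Finset.mem_univ j), Finset.card_univ,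
        Fintype.card_fin, nsmul_eq_mul]
    refine (Finset.sum_congr rfl fun j _ => inner j).trans ?_
    rw [Finset.sum_const, Finset.card_univ, Fintype.card_fin, nsmul_eq_mul]
  have hcast : ((k - 1 : ℕ) : ℝ) * (k : ℝ) = (k : ℝ) * (k : ℝ) - (k : ℝ) := by
    cases k with
    | zero => simp
    | succ n => push_cast [Nat.succ_sub_one]; ring
  simp only [youngK]
  rw [rowK_eq k D hsym y x₁ x₂ x₃ x₄, rowK_eq k D hsym y x₂ x₁ x₃ x₄,
    rowK_eq k D hsym y x₁ x₂ x₄ x₃, rowK_eq k D hsym y x₂ x₁ x₄ x₃]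
  simp only [pr, Finset.sum_add_distrib]
  simp only [Finset.sum_add_distrib, Finset.sum_sub_distrib] at hMsum hGsum
  linear_combination (Nat.factorial k : ℝ) * hA + (Nat.factorial k : ℝ) * hMsum
    + (Nat.factorial k : ℝ) * hGsum
    + (2 * D y x₁ x₂ x₃ x₄ * (Nat.factorial k : ℝ)) * hcast


end CurvJet
end

section
/- Let R be an algebraic curvature tensor on V which is Einstein, i.e. ric_R = c⟪·,·⟫ for some c ∈ ℝ. Then for all x,y ∈ V: R*R(x,y,y,x) = −4Σᵢ (R_{x,eᵢ}·R)(eᵢ,y,y,x) = −4Σᵢ (R_{y,eᵢ}·R)(eᵢ,x,x,y), and the Ricci tensor of the algebraic curvature tensor R*R vanishes, i.e. Σᵢ R*R(x,eᵢ,y,eᵢ) = 0 for all x,y. -/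
open scoped RealInnerProductSpace

namespace CurvJet

variable {V : Type*} [NormedAddCommGroup V] [InnerProductSpace ℝ V] {n : ℕ}

section StarEinsteinHelpers

variable (e : OrthonormalBasis (Fin n) ℝ V) (R : Curv V)

lemma expand_first' (x a b c : V) : R x a b c = ∑ i, ⟪x, e i⟫ * R (e i) a b c := by
  conv_lhs => rw [← e.sum_repr' x]
  simp [map_sum, real_inner_comm]

lemma expand_last' (x a b c : V) : R a b c x = ∑ i, ⟪x, e i⟫ * R a b c (e i) := by
  conv_lhs => rw [← e.sum_repr' x]
  simp [map_sum, real_inner_comm]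

lemma act4_expand' (u v a b c d : V) :
    act4 (curvEnd e R u v) (toFun4 R) a b c d
    = -((∑ i, R u v a (e i) * R (e i) b c d) + (∑ i, R u v b (e i) * R a (e i) c d)
      + (∑ i, R u v c (e i) * R a b (e i) d) + (∑ i, R u v d (e i) * R a b c (e i))) := by
  simp [act4, toFun4, curvEnd, map_sum]

lemma curv_a2' (hR : IsCurv R) (x y z w : V) : R x y z w = -R x y w z := by
  obtain ⟨h1, hp, _⟩ := hR
  rw [hp x y z w, h1 z w x y, hp w z x y]

lemma act4_a1' (hR : IsCurv R) (B : V → V) (x y z w : V) :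
    act4 B (toFun4 R) x y z w = -act4 B (toFun4 R) y x z w := by
  obtain ⟨h1, _, _⟩ := hR
  simp only [act4, toFun4]
  rw [h1 (B x) y z w, h1 x (B y) z w, h1 x y (B z) w, h1 x y z (B w)]
  ring

lemma act4_pair' (hR : IsCurv R) (B : V → V) (x y z w : V) :
    act4 B (toFun4 R) x y z w = act4 B (toFun4 R) z w x y := by
  obtain ⟨_, hp, _⟩ := hR
  simp only [act4, toFun4]
  rw [hp (B x) y z w, hp x (B y) z w, hp x y (B z) w, hp x y z (B w)]
  ring

lemma act4_a2' (hR : IsCurv R) (B : V → V) (x y z w : V) :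
    act4 B (toFun4 R) x y z w = -act4 B (toFun4 R) x y w z := by
  rw [act4_pair' R hR B, act4_a1' R hR B, act4_pair' R hR B w z x y]

lemma act4_r1' (hR : IsCurv R) (B : V → V) (x y z : V) :
    act4 B (toFun4 R) x y y z = act4 B (toFun4 R) z y y x := by
  rw [act4_pair' R hR B x y y z, act4_a1' R hR B y z x y, act4_a2' R hR B z y x y, neg_neg]

lemma act4_r2' (hR : IsCurv R) (B : V → V) (x y z : V) :
    act4 B (toFun4 R) x y z x = act4 B (toFun4 R) x z y x := by
  rw [act4_pair' R hR B x y z x, act4_a1' R hR B z x x y, act4_a2' R hR B x z x y, neg_neg]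

lemma act4_r3' (hR : IsCurv R) (B : V → V) (x y z : V) :
    act4 B (toFun4 R) z x x y = act4 B (toFun4 R) x z y x := by
  rw [act4_pair' R hR B z x x y]
  exact act4_r2' R hR B x y z

lemma sum_antisym' (f : Fin n → Fin n → ℝ) (h : ∀ i k, f i k = -f k i) :
    (∑ i, ∑ k, f i k) = 0 := by
  have key : (∑ i, ∑ k, f i k) = -(∑ i, ∑ k, f i k) := by
    conv_lhs => rw [Finset.sum_comm]
    calc (∑ k, ∑ i, f i k) = ∑ k, ∑ i, -f k i := by
          refine Finset.sum_congr rfl fun k _ => Finset.sum_congr rfl fun i _ => h i k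
      _ = -(∑ k, ∑ i, f k i) := by simp
  linarith

lemma act4_swapUV' (hR : IsCurv R) (u v a b c d : V) :
    act4 (curvEnd e R u v) (toFun4 R) a b c d
      = -act4 (curvEnd e R v u) (toFun4 R) a b c d := by
  obtain ⟨h1, _, _⟩ := hR
  rw [act4_expand', act4_expand']
  simp only [h1 u v, neg_mul, Finset.sum_neg_distrib]
  ring

lemma einstein_sum' (c : ℝ) (hE : ∀ x y, ric e R x y = c * ⟪x, y⟫) (a b : V) :
    ∑ i, R a (e i) b (e i) = -(c * ⟪a, b⟫) := by
  have := hE a b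
  simp only [ric] at this
  linarith

lemma trace_act4' (hR : IsCurv R) (c : ℝ) (hE : ∀ x y, ric e R x y = c * ⟪x, y⟫)
    (u v a b : V) :
    ∑ i, act4 (curvEnd e R u v) (toFun4 R) a (e i) b (e i) = 0 := by
  have h2 := curv_a2' R hR
  have hEs := einstein_sum' e R c hE
  have K1 : (∑ i, ∑ k, R u v a (e k) * R (e k) (e i) b (e i)) = -(c * R u v a b) := by
    rw [Finset.sum_comm]
    have step : ∀ k, (∑ i, R u v a (e k) * R (e k) (e i) b (e i))
        = -(c * (⟪b, e k⟫ * R u v a (e k))) := by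
      intro k
      rw [← Finset.mul_sum, hEs (e k) b, real_inner_comm]
      ring
    rw [Finset.sum_congr rfl fun k _ => step k, expand_last' e R b u v a, Finset.mul_sum]
    simp
  have K3 : (∑ i, ∑ k, R u v b (e k) * R a (e i) (e k) (e i)) = c * R u v a b := by
    rw [Finset.sum_comm]
    have step : ∀ k, (∑ i, R u v b (e k) * R a (e i) (e k) (e i))
        = -(c * (⟪a, e k⟫ * R u v b (e k))) := by
      intro k
      rw [← Finset.mul_sum, hEs a (e k), real_inner_comm]
      ring
    rw [Finset.sum_congr rfl fun k _ => step k]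
    have ha : R u v a b = -(∑ k, ⟪a, e k⟫ * R u v b (e k)) := by
      rw [h2 u v a b, ← expand_last' e R a u v b]
    rw [ha]
    simp [Finset.mul_sum]
  have K24 : (∑ i, ∑ k, R u v (e i) (e k) * (R a (e k) b (e i) + R a (e i) b (e k))) = 0 := by
    apply sum_antisym'
    intro i k
    rw [h2 u v (e i) (e k)]
    ring
  calc ∑ i, act4 (curvEnd e R u v) (toFun4 R) a (e i) b (e i)
      = ∑ i, -((∑ k, R u v a (e k) * R (e k) (e i) b (e i))
          + (∑ k, R u v (e i) (e k) * R a (e k) b (e i))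
          + (∑ k, R u v b (e k) * R a (e i) (e k) (e i))
          + (∑ k, R u v (e i) (e k) * R a (e i) b (e k))) := by
        refine Finset.sum_congr rfl fun i _ => act4_expand' e R u v a (e i) b (e i)
    _ = -((∑ i, ∑ k, R u v a (e k) * R (e k) (e i) b (e i))
          + (∑ i, ∑ k, R u v (e i) (e k) * (R a (e k) b (e i) + R a (e i) b (e k)))
          + (∑ i, ∑ k, R u v b (e k) * R a (e i) (e k) (e i))) := by
        simp only [Finset.sum_neg_distrib, Finset.sum_add_distrib, mul_add]
        ring
    _ = 0 := by rw [K1, K3, K24]; ring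

lemma J_symm' (hR : IsCurv R) (c : ℝ) (hE : ∀ x y, ric e R x y = c * ⟪x, y⟫) (x y : V) :
    (∑ j, act4 (curvEnd e R x (e j)) (toFun4 R) (e j) y y x)
    = ∑ j, act4 (curvEnd e R y (e j)) (toFun4 R) (e j) x x y := by
  obtain ⟨h1, hp, hb⟩ := hR
  have hEs := einstein_sum' e R c hE
  have key : ∀ x y : V, (∑ j, act4 (curvEnd e R x (e j)) (toFun4 R) (e j) y y x)
      = -(c * R x y y x
        + ((∑ j, ∑ i, R x (e j) y (e i) * R (e j) y (e i) x)
            - (∑ j, ∑ i, R x (e j) y (e i) * R (e i) y (e j) x))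
        + (∑ j, ∑ i, R x (e j) y (e i) * R (e j) y (e i) x)
        + (∑ j, ∑ i, R x (e j) x (e i) * R (e j) y y (e i))) := by
    intro x y
    have t1 : (∑ j, ∑ i, R x (e j) (e j) (e i) * R (e i) y y x) = c * R x y y x := by
      rw [Finset.sum_comm]
      have step : ∀ i, (∑ j, R x (e j) (e j) (e i) * R (e i) y y x)
          = c * (⟪x, e i⟫ * R (e i) y y x) := by
        intro i
        rw [← Finset.sum_mul]
        have hin : (∑ j, R x (e j) (e j) (e i)) = c * ⟪x, e i⟫ := by
          have : (∑ j, R x (e j) (e j) (e i)) = -∑ j, R (e i) (e j) x (e j) := by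
            rw [← Finset.sum_neg_distrib]
            refine Finset.sum_congr rfl fun j _ => ?_
            rw [hp x (e j) (e j) (e i), h1 (e j) (e i) x (e j)]
          rw [this, hEs (e i) x, real_inner_comm]
          ring
        rw [hin]; ring
      rw [Finset.sum_congr rfl fun i _ => step i, ← Finset.mul_sum, ← expand_first' e R x y y x]
    have hbr : ∀ j i, R (e j) (e i) y x = R (e j) y (e i) x - R (e i) y (e j) x := by
      intro j i
      have h := hb (e j) (e i) y x
      have h' := h1 y (e j) (e i) x
      linarith
    have t2 : (∑ j, ∑ i, R x (e j) y (e i) * R (e j) (e i) y x)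
        = (∑ j, ∑ i, R x (e j) y (e i) * R (e j) y (e i) x)
          - (∑ j, ∑ i, R x (e j) y (e i) * R (e i) y (e j) x) := by
      rw [← Finset.sum_sub_distrib]
      refine Finset.sum_congr rfl fun j _ => ?_
      rw [← Finset.sum_sub_distrib]
      refine Finset.sum_congr rfl fun i _ => ?_
      rw [hbr j i]; ring
    calc (∑ j, act4 (curvEnd e R x (e j)) (toFun4 R) (e j) y y x)
        = ∑ j, -((∑ i, R x (e j) (e j) (e i) * R (e i) y y x)
            + (∑ i, R x (e j) y (e i) * R (e j) (e i) y x)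
            + (∑ i, R x (e j) y (e i) * R (e j) y (e i) x)
            + (∑ i, R x (e j) x (e i) * R (e j) y y (e i))) := by
          exact Finset.sum_congr rfl fun j _ => act4_expand' e R x (e j) (e j) y y x
      _ = -((∑ j, ∑ i, R x (e j) (e j) (e i) * R (e i) y y x)
            + (∑ j, ∑ i, R x (e j) y (e i) * R (e j) (e i) y x)
            + (∑ j, ∑ i, R x (e j) y (e i) * R (e j) y (e i) x)
            + (∑ j, ∑ i, R x (e j) x (e i) * R (e j) y y (e i))) := by
          simp only [Finset.sum_neg_distrib, Finset.sum_add_distrib]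
      _ = _ := by rw [t1, t2]
  have hP : (∑ j, ∑ i, R y (e j) x (e i) * R (e j) x (e i) y)
      = ∑ j, ∑ i, R x (e j) y (e i) * R (e j) y (e i) x := by
    calc (∑ j, ∑ i, R y (e j) x (e i) * R (e j) x (e i) y)
        = ∑ j, ∑ i, R x (e i) y (e j) * R (e i) y (e j) x := by
          refine Finset.sum_congr rfl fun j _ => Finset.sum_congr rfl fun i _ => ?_
          rw [hp y (e j) x (e i), hp (e j) x (e i) y]
      _ = _ := Finset.sum_comm
  have hQ : (∑ j, ∑ i, R y (e j) x (e i) * R (e i) x (e j) y)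
      = ∑ j, ∑ i, R x (e j) y (e i) * R (e i) y (e j) x := by
    calc (∑ j, ∑ i, R y (e j) x (e i) * R (e i) x (e j) y)
        = ∑ j, ∑ i, R x (e i) y (e j) * R (e j) y (e i) x := by
          refine Finset.sum_congr rfl fun j _ => Finset.sum_congr rfl fun i _ => ?_
          rw [hp y (e j) x (e i), hp (e i) x (e j) y]
      _ = _ := Finset.sum_comm
  have hW : (∑ j, ∑ i, R y (e j) y (e i) * R (e j) x x (e i))
      = ∑ j, ∑ i, R x (e j) x (e i) * R (e j) y y (e i) := by
    refine Finset.sum_congr rfl fun j _ => Finset.sum_congr rfl fun i _ => ?_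
    rw [h1 (e j) x x (e i), h1 (e j) y y (e i)]
    ring
  rw [key x y, key y x, hP, hQ, hW, hp y x x y]

lemma RstarR_diag' (hR : IsCurv R) (x y : V) :
    RstarR e R x y y x
      = -2 * ((∑ j, act4 (curvEnd e R x (e j)) (toFun4 R) (e j) y y x)
        + (∑ j, act4 (curvEnd e R y (e j)) (toFun4 R) (e j) x x y)) := by
  have expand : RstarR e R x y y x
      = -((∑ j, act4 (curvEnd e R x (e j)) (toFun4 R) (e j) y y x)
        + (∑ j, act4 (curvEnd e R y (e j)) (toFun4 R) x (e j) y x)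
        + (∑ j, act4 (curvEnd e R y (e j)) (toFun4 R) x y (e j) x)
        + (∑ j, act4 (curvEnd e R x (e j)) (toFun4 R) x y y (e j))) := rfl
  rw [expand]
  have e4 : ∀ j, act4 (curvEnd e R x (e j)) (toFun4 R) x y y (e j)
      = act4 (curvEnd e R x (e j)) (toFun4 R) (e j) y y x :=
    fun j => act4_r1' R hR _ x y (e j)
  have e3 : ∀ j, act4 (curvEnd e R y (e j)) (toFun4 R) x y (e j) x
      = act4 (curvEnd e R y (e j)) (toFun4 R) x (e j) y x :=
    fun j => act4_r2' R hR _ x y (e j)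
  have e2 : ∀ j, act4 (curvEnd e R y (e j)) (toFun4 R) x (e j) y x
      = act4 (curvEnd e R y (e j)) (toFun4 R) (e j) x x y :=
    fun j => (act4_r3' R hR _ x y (e j)).symm
  rw [Finset.sum_congr rfl fun j _ => e4 j, Finset.sum_congr rfl fun j _ => e3 j,
    Finset.sum_congr rfl fun j _ => e2 j]
  ring

lemma ricci_flat' (hR : IsCurv R) (c : ℝ) (hE : ∀ x y, ric e R x y = c * ⟪x, y⟫) (x y : V) :
    ∑ i, RstarR e R x (e i) y (e i) = 0 := by
  have expand : ∀ i : Fin n, RstarR e R x (e i) y (e i)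
      = -((∑ j, act4 (curvEnd e R x (e j)) (toFun4 R) (e j) (e i) y (e i))
        + (∑ j, act4 (curvEnd e R (e i) (e j)) (toFun4 R) x (e j) y (e i))
        + (∑ j, act4 (curvEnd e R y (e j)) (toFun4 R) x (e i) (e j) (e i))
        + (∑ j, act4 (curvEnd e R (e i) (e j)) (toFun4 R) x (e i) y (e j))) := fun i => rfl
  rw [Finset.sum_congr rfl fun i _ => expand i]
  simp only [Finset.sum_neg_distrib, Finset.sum_add_distrib]
  have S1 : (∑ i, ∑ j, act4 (curvEnd e R x (e j)) (toFun4 R) (e j) (e i) y (e i)) = 0 := by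
    rw [Finset.sum_comm]
    exact Finset.sum_eq_zero fun j _ => trace_act4' e R hR c hE x (e j) (e j) y
  have S3 : (∑ i, ∑ j, act4 (curvEnd e R y (e j)) (toFun4 R) x (e i) (e j) (e i)) = 0 := by
    rw [Finset.sum_comm]
    exact Finset.sum_eq_zero fun j _ => trace_act4' e R hR c hE y (e j) x (e j)
  have S24 : (∑ i, ∑ j, act4 (curvEnd e R (e i) (e j)) (toFun4 R) x (e i) y (e j))
      = -(∑ i, ∑ j, act4 (curvEnd e R (e i) (e j)) (toFun4 R) x (e j) y (e i)) := by
    calc (∑ i, ∑ j, act4 (curvEnd e R (e i) (e j)) (toFun4 R) x (e i) y (e j))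
        = ∑ i, ∑ j, -(act4 (curvEnd e R (e j) (e i)) (toFun4 R) x (e i) y (e j)) := by
          refine Finset.sum_congr rfl fun i _ => Finset.sum_congr rfl fun j _ => ?_
          rw [act4_swapUV' e R hR (e i) (e j)]
      _ = -(∑ i, ∑ j, act4 (curvEnd e R (e j) (e i)) (toFun4 R) x (e i) y (e j)) := by simp
      _ = -(∑ i, ∑ j, act4 (curvEnd e R (e i) (e j)) (toFun4 R) x (e j) y (e i)) := by
          rw [Finset.sum_comm]
  rw [S1, S3, S24]
  ring

end StarEinsteinHelpers

/-- For an Einstein algebraic curvature tensor, the Jacobi operator of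
`R*R` has the two stated expressions and `R*R` is Ricci flat. -/
theorem star_einstein
    {V : Type*} [NormedAddCommGroup V] [InnerProductSpace ℝ V] {n : ℕ}
    (e : OrthonormalBasis (Fin n) ℝ V)
    (R : Curv V) (hR : IsCurv R)
    (c : ℝ) (hE : ∀ x y, ric e R x y = c * ⟪x, y⟫) :
    (∀ x y, RstarR e R x y y x =
        -4 * ∑ i, act4 (curvEnd e R x (e i)) (toFun4 R) (e i) y y x) ∧
    (∀ x y, RstarR e R x y y x =
        -4 * ∑ i, act4 (curvEnd e R y (e i)) (toFun4 R) (e i) x x y) ∧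
    (∀ x y, ∑ i, RstarR e R x (e i) y (e i) = 0) := by
  refine ⟨fun x y => ?_, fun x y => ?_, fun x y => ricci_flat' e R hR c hE x y⟩
  · rw [RstarR_diag' e R hR x y, ← J_symm' e R hR c hE x y]
    ring
  · rw [RstarR_diag' e R hR x y, J_symm' e R hR c hE x y]
    ring

end CurvJet
end

section
/- Let (R, ∇R, ∇²R) be an algebraic two-jet on V. Then ∇*∇R(x₁,x₂,x₃,x₄) = (1/4)·Young(2,2)[(z₁,z₂,z₃,z₄) ↦ ∇²_{z₁,z₃}ric(z₂,z₄)](x₁,x₂,x₃,x₄) − (1/2)·R*R(x₁,x₂,x₃,x₄) for all x₁,x₂,x₃,x₄ ∈ V. In particular, if ∇²ric = 0, then ∇*∇R = −(1/2)·R*R. -/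
open scoped RealInnerProductSpace

namespace CurvJet

variable {V : Type*} [NormedAddCommGroup V] [InnerProductSpace ℝ V] {n : ℕ}

/-! ### Auxiliary machinery for the Weitzenböck formula -/

section Aux

variable (e : OrthonormalBasis (Fin n) ℝ V) (R : Curv V)

/-- Ricci endomorphism. -/
noncomputable def ricE (x : V) : V := ∑ k, ric e R x (e k) • e k

/-- `K_{u,v} = R_{u,v}⋅R`. -/
noncomputable def CK (u v : V) : V → V → V → V → ℝ := act4 (curvEnd e R u v) (toFun4 R)

/-- `C(x,y;z,w) = ∑ᵢ K_{eᵢ,x}(eᵢ,y,z,w)`. -/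
noncomputable def Cfun (x y z w : V) : ℝ := ∑ i, CK e R (e i) x (e i) y z w

noncomputable def Nq (x y z w : V) : ℝ := ∑ i, ∑ k, R (e i) x y (e k) * R (e i) (e k) z w
noncomputable def Sq (p q r s : V) : ℝ := ∑ i, ∑ k, R (e i) p q (e k) * R (e i) r s (e k)
noncomputable def Wq (x y z w : V) : ℝ := ∑ i, ∑ k, R x y (e i) (e k) * R (e i) (e k) z w

variable {e R}

lemma ce1 (T : Curv V) (u v p y z w : V) :
    T (curvEnd e R u v p) y z w = ∑ k, R u v p (e k) * T (e k) y z w := by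
  simp [curvEnd, map_sum, LinearMap.sum_apply, map_smul, LinearMap.smul_apply, smul_eq_mul]

lemma ce2 (T : Curv V) (u v p y z w : V) :
    T y (curvEnd e R u v p) z w = ∑ k, R u v p (e k) * T y (e k) z w := by
  simp [curvEnd, map_sum, LinearMap.sum_apply, map_smul, LinearMap.smul_apply, smul_eq_mul]

lemma ce3 (T : Curv V) (u v p y z w : V) :
    T y z (curvEnd e R u v p) w = ∑ k, R u v p (e k) * T y z (e k) w := by
  simp [curvEnd, map_sum, LinearMap.sum_apply, map_smul, LinearMap.smul_apply, smul_eq_mul]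

lemma ce4 (T : Curv V) (u v p y z w : V) :
    T y z w (curvEnd e R u v p) = ∑ k, R u v p (e k) * T y z w (e k) := by
  simp [curvEnd, map_sum, map_smul, smul_eq_mul]

lemma ricE_apply4 (T : Curv V) (x y z w : V) :
    T y z w (ricE e R x) = ∑ k, ric e R x (e k) * T y z w (e k) := by
  simp [ricE, map_sum, map_smul, smul_eq_mul]

lemma ricE_apply1 (T : Curv V) (x y z w : V) :
    T (ricE e R x) y z w = ∑ k, ric e R x (e k) * T (e k) y z w := by
  simp [ricE, map_sum, LinearMap.sum_apply, map_smul, LinearMap.smul_apply, smul_eq_mul]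

section Symms

variable (hR : IsCurv R)
include hR

lemma R_anti2 (x y z w : V) : R x y z w = - R x y w z := by
  rw [hR.2.1, hR.1, hR.2.1]

lemma ric_symm (x y : V) : ric e R x y = ric e R y x := by
  simp only [ric, neg_inj]
  exact Finset.sum_congr rfl fun i _ => hR.2.1 x (e i) y (e i)

lemma curvEnd_swap (u v z : V) : curvEnd e R u v z = - curvEnd e R v u z := by
  simp only [curvEnd, ← Finset.sum_neg_distrib, ← neg_smul]
  exact Finset.sum_congr rfl fun i _ => by rw [hR.1]

lemma CK_anti1 (u v z₁ z₂ z₃ z₄ : V) :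
    CK e R u v z₁ z₂ z₃ z₄ = - CK e R u v z₂ z₁ z₃ z₄ := by
  simp only [CK, act4, toFun4]
  have h1 := hR.1 (curvEnd e R u v z₁) z₂ z₃ z₄
  have h2 := hR.1 z₁ (curvEnd e R u v z₂) z₃ z₄
  have h3 := hR.1 z₁ z₂ (curvEnd e R u v z₃) z₄
  have h4 := hR.1 z₁ z₂ z₃ (curvEnd e R u v z₄)
  linarith

lemma CK_pair (u v z₁ z₂ z₃ z₄ : V) :
    CK e R u v z₁ z₂ z₃ z₄ = CK e R u v z₃ z₄ z₁ z₂ := by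
  simp only [CK, act4, toFun4]
  have h1 := hR.2.1 (curvEnd e R u v z₁) z₂ z₃ z₄
  have h2 := hR.2.1 z₁ (curvEnd e R u v z₂) z₃ z₄
  have h3 := hR.2.1 z₁ z₂ (curvEnd e R u v z₃) z₄
  have h4 := hR.2.1 z₁ z₂ z₃ (curvEnd e R u v z₄)
  linarith

lemma CK_dirswap (u v z₁ z₂ z₃ z₄ : V) :
    CK e R u v z₁ z₂ z₃ z₄ = - CK e R v u z₁ z₂ z₃ z₄ := by
  simp only [CK, act4, toFun4, curvEnd_swap hR u v, map_neg, LinearMap.neg_apply]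
  rw [← neg_one_smul ℝ (curvEnd e R v u z₁), map_smul]
  simp only [LinearMap.smul_apply, smul_eq_mul]
  ring

/-- First Bianchi moved around: `R p b c d = R b c d p - R b d c p`. -/
lemma lemA1 (p b c d : V) : R p b c d = R b c d p - R b d c p := by
  have hb := hR.2.2 p b c d
  have h1 : R b c p d = - R b c d p := R_anti2 hR b c p d
  have h2 : R c p b d = R b d c p := hR.2.1 c p b d
  linarith

end Symms

end Aux
section Sums

variable {e : OrthonormalBasis (Fin n) ℝ V} {R : Curv V}

lemma IsCurv.anti2 {T : Curv V} (hT : IsCurv T) (x y z w : V) : T x y z w = - T x y w z := by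
  rw [hT.2.1, hT.1, hT.2.1]

variable (hR : IsCurv R)
include hR

lemma tau_closed (x y z w : V) :
    (∑ i, CK e R x y z (e i) w (e i))
      = R x y z (ricE e R w) + R x y w (ricE e R z) := by
  have hpt : ∀ i, CK e R x y z (e i) w (e i)
      = -((∑ k, R x y z (e k) * R (e k) (e i) w (e i))
        + (∑ k, R x y (e i) (e k) * R z (e k) w (e i))
        + (∑ k, R x y w (e k) * R z (e i) (e k) (e i))
        + (∑ k, R x y (e i) (e k) * R z (e i) w (e k))) := fun i => by
    simp only [CK, act4, toFun4, ce1, ce2, ce3, ce4]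
  have h0 : (∑ i, CK e R x y z (e i) w (e i))
      = -((∑ i, ∑ k, R x y z (e k) * R (e k) (e i) w (e i))
        + ((∑ i, ∑ k, R x y (e i) (e k) * R z (e k) w (e i))
          + (∑ i, ∑ k, R x y (e i) (e k) * R z (e i) w (e k)))
        + (∑ i, ∑ k, R x y w (e k) * R z (e i) (e k) (e i))) := by
    rw [Finset.sum_congr rfl fun i _ => hpt i]
    simp only [Finset.sum_neg_distrib, Finset.sum_add_distrib]
    ring
  have hA : (∑ i, ∑ k, R x y z (e k) * R (e k) (e i) w (e i))
      = - R x y z (ricE e R w) := by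
    rw [Finset.sum_comm, ricE_apply4, ← Finset.sum_neg_distrib]
    refine Finset.sum_congr rfl fun k _ => ?_
    rw [← Finset.mul_sum]
    have h1 : ∑ i, R (e k) (e i) w (e i) = - ric e R (e k) w := by simp [ric]
    rw [h1, ric_symm hR]; ring
  have hC : (∑ i, ∑ k, R x y w (e k) * R z (e i) (e k) (e i))
      = - R x y w (ricE e R z) := by
    rw [Finset.sum_comm, ricE_apply4, ← Finset.sum_neg_distrib]
    refine Finset.sum_congr rfl fun k _ => ?_
    rw [← Finset.mul_sum]
    have h1 : ∑ i, R z (e i) (e k) (e i) = - ric e R z (e k) := by simp [ric]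
    rw [h1]; ring
  have hBD : (∑ i, ∑ k, R x y (e i) (e k) * R z (e k) w (e i))
      + (∑ i, ∑ k, R x y (e i) (e k) * R z (e i) w (e k)) = 0 := by
    have h2 : (∑ i, ∑ k, R x y (e i) (e k) * R z (e k) w (e i))
        = ∑ i, ∑ k, -(R x y (e i) (e k) * R z (e i) w (e k)) := by
      rw [Finset.sum_comm]
      refine Finset.sum_congr rfl fun i _ => Finset.sum_congr rfl fun k _ => ?_
      rw [R_anti2 hR x y (e k) (e i)]; ring
    rw [h2]
    simp only [Finset.sum_neg_distrib]
    ring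
  rw [h0, hA, hC]
  have := hBD
  linarith

lemma Cf_closed (x y z w : V) :
    Cfun e R x y z w = R (ricE e R x) y z w - Nq e R x y z w
      + Sq e R x z y w - Sq e R x w y z := by
  have hpt : ∀ i, CK e R (e i) x (e i) y z w
      = -((∑ k, R (e i) x (e i) (e k) * R (e k) y z w)
        + (∑ k, R (e i) x y (e k) * R (e i) (e k) z w)
        + (∑ k, R (e i) x z (e k) * R (e i) y (e k) w)
        + (∑ k, R (e i) x w (e k) * R (e i) y z (e k))) := fun i => by
    simp only [CK, act4, toFun4, ce1, ce2, ce3, ce4]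
  have h0 : Cfun e R x y z w
      = -((∑ i, ∑ k, R (e i) x (e i) (e k) * R (e k) y z w)
        + (∑ i, ∑ k, R (e i) x y (e k) * R (e i) (e k) z w)
        + (∑ i, ∑ k, R (e i) x z (e k) * R (e i) y (e k) w)
        + (∑ i, ∑ k, R (e i) x w (e k) * R (e i) y z (e k))) := by
    rw [Cfun, Finset.sum_congr rfl fun i _ => hpt i]
    simp only [Finset.sum_neg_distrib, Finset.sum_add_distrib]
  have hA : (∑ i, ∑ k, R (e i) x (e i) (e k) * R (e k) y z w)
      = - R (ricE e R x) y z w := by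
    rw [Finset.sum_comm, ricE_apply1, ← Finset.sum_neg_distrib]
    refine Finset.sum_congr rfl fun k _ => ?_
    rw [← Finset.sum_mul]
    have h1 : ∑ i, R (e i) x (e i) (e k) = - ric e R x (e k) := by
      have hc : ∀ i, R (e i) x (e i) (e k) = R x (e i) (e k) (e i) := fun i => by
        have h2 := hR.1 (e i) x (e i) (e k)
        have h3 := R_anti2 hR x (e i) (e i) (e k)
        linarith
      rw [Finset.sum_congr rfl fun i _ => hc i]
      simp [ric]
    rw [h1]; ring
  have hC : (∑ i, ∑ k, R (e i) x z (e k) * R (e i) y (e k) w) = - Sq e R x z y w := by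
    rw [Sq, ← Finset.sum_neg_distrib]
    refine Finset.sum_congr rfl fun i _ => ?_
    rw [← Finset.sum_neg_distrib]
    refine Finset.sum_congr rfl fun k _ => ?_
    rw [R_anti2 hR (e i) y (e k) w]; ring
  rw [h0, hA, hC]
  simp only [Nq, Sq]
  ring

lemma Nq_diff (x y z w : V) :
    Nq e R x y z w - Nq e R y x z w = - Wq e R x y z w := by
  simp only [Nq, Wq, ← Finset.sum_sub_distrib, ← Finset.sum_neg_distrib]
  refine Finset.sum_congr rfl fun i _ => Finset.sum_congr rfl fun k _ => ?_
  have hb := hR.2.2 (e i) x y (e k)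
  have h2 := hR.1 y (e i) x (e k)
  have h3 : R (e i) x y (e k) - R (e i) y x (e k) = - R x y (e i) (e k) := by linarith
  rw [← sub_mul, h3]; ring

lemma Wq_symm (x y z w : V) : Wq e R x y z w = Wq e R z w x y := by
  refine Finset.sum_congr rfl fun i _ => Finset.sum_congr rfl fun k _ => ?_
  have h1 := hR.2.1 x y (e i) (e k)
  have h2 := hR.2.1 (e i) (e k) z w
  rw [h1, h2]; ring

lemma Sq_symm2 (p q r s : V) : Sq e R p q r s = Sq e R q p s r := by
  have key : ∀ u v p' q' : V, R u p' q' v = R v q' p' u := fun u v p' q' => by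
    have h1 := hR.2.1 u p' q' v
    have h2 := hR.1 q' v u p'
    have h3 := R_anti2 hR v q' u p'
    linarith
  rw [Sq, Finset.sum_comm]
  refine Finset.sum_congr rfl fun i _ => Finset.sum_congr rfl fun k _ => ?_
  rw [key (e k) (e i) p q, key (e k) (e i) r s]

lemma RstarR_eq (a b c d : V) : RstarR e R a b c d =
    Cfun e R a b c d - Cfun e R b a c d + Cfun e R c d a b - Cfun e R d c a b := by
  have h1 : (∑ j, act4 (curvEnd e R a (e j)) (toFun4 R) (e j) b c d) = - Cfun e R a b c d := by
    rw [Cfun, ← Finset.sum_neg_distrib]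
    refine Finset.sum_congr rfl fun j _ => ?_
    exact CK_dirswap hR a (e j) (e j) b c d
  have h2 : (∑ j, act4 (curvEnd e R b (e j)) (toFun4 R) a (e j) c d) = Cfun e R b a c d := by
    rw [Cfun]
    refine Finset.sum_congr rfl fun j _ => ?_
    have ha := CK_anti1 (e := e) hR b (e j) a (e j) c d
    have hd := CK_dirswap (e := e) hR b (e j) (e j) a c d
    show CK e R b (e j) a (e j) c d = CK e R (e j) b (e j) a c d
    linarith
  have h3 : (∑ j, act4 (curvEnd e R c (e j)) (toFun4 R) a b (e j) d) = - Cfun e R c d a b := by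
    rw [Cfun, ← Finset.sum_neg_distrib]
    refine Finset.sum_congr rfl fun j _ => ?_
    have hp := CK_pair (e := e) hR c (e j) a b (e j) d
    have hd := CK_dirswap (e := e) hR c (e j) (e j) d a b
    show CK e R c (e j) a b (e j) d = - CK e R (e j) c (e j) d a b
    linarith
  have h4 : (∑ j, act4 (curvEnd e R d (e j)) (toFun4 R) a b c (e j)) = Cfun e R d c a b := by
    rw [Cfun]
    refine Finset.sum_congr rfl fun j _ => ?_
    have hp := CK_pair (e := e) hR d (e j) a b c (e j)
    have ha := CK_anti1 (e := e) hR d (e j) c (e j) a b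
    have hd := CK_dirswap (e := e) hR d (e j) (e j) c a b
    show CK e R d (e j) a b c (e j) = CK e R (e j) d (e j) c a b
    linarith
  rw [RstarR, star4, h1, h2, h3, h4]
  ring

end Sums
section Jet

variable {e : OrthonormalBasis (Fin n) ℝ V} {R : Curv V} {D2 : V →ₗ[ℝ] V →ₗ[ℝ] Curv V}

lemma rho_sym34 (hD2curv : ∀ x y, IsCurv (D2 x y)) (x y z w : V) :
    nabla2Ric e D2 x y z w = nabla2Ric e D2 x y w z := by
  simp only [nabla2Ric, neg_inj]
  exact Finset.sum_congr rfl fun i _ => (hD2curv x y).2.1 z (e i) w (e i)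

lemma tau_viaCK
    (hRicci : ∀ x y z₁ z₂ z₃ z₄, D2 x y z₁ z₂ z₃ z₄ - D2 y x z₁ z₂ z₃ z₄ =
      act4 (curvEnd e R x y) (toFun4 R) z₁ z₂ z₃ z₄)
    (x y z w : V) :
    nabla2Ric e D2 x y z w - nabla2Ric e D2 y x z w
      = - ∑ i, CK e R x y z (e i) w (e i) := by
  have h : ∑ i, CK e R x y z (e i) w (e i)
      = ∑ i, (D2 x y z (e i) w (e i) - D2 y x z (e i) w (e i)) :=
    Finset.sum_congr rfl fun i _ => (hRicci x y z (e i) w (e i)).symm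
  rw [nabla2Ric, nabla2Ric, h, Finset.sum_sub_distrib]
  ring

lemma tau_eq (hR : IsCurv R)
    (hRicci : ∀ x y z₁ z₂ z₃ z₄, D2 x y z₁ z₂ z₃ z₄ - D2 y x z₁ z₂ z₃ z₄ =
      act4 (curvEnd e R x y) (toFun4 R) z₁ z₂ z₃ z₄)
    (x y z w : V) :
    nabla2Ric e D2 x y z w - nabla2Ric e D2 y x z w
      = -(R x y z (ricE e R w) + R x y w (ricE e R z)) := by
  rw [tau_viaCK hRicci, tau_closed hR]

lemma L_eq (hD2curv : ∀ x y, IsCurv (D2 x y))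
    (hB2 : ∀ x y z w u v, D2 x y z w u v + D2 x z w y u v + D2 x w y z u v = 0)
    (hRicci : ∀ x y z₁ z₂ z₃ z₄, D2 x y z₁ z₂ z₃ z₄ - D2 y x z₁ z₂ z₃ z₄ =
      act4 (curvEnd e R x y) (toFun4 R) z₁ z₂ z₃ z₄)
    (a b c d : V) :
    roughLap e D2 a b c d =
      nabla2Ric e D2 a c d b - nabla2Ric e D2 a d c b
        - nabla2Ric e D2 b c d a + nabla2Ric e D2 b d c a
        - Cfun e R a b c d + Cfun e R b a c d := by
  have hG : ∀ x y : V, (∑ i, D2 x (e i) (e i) y c d)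
      = - nabla2Ric e D2 x c d y + nabla2Ric e D2 x d c y := by
    intro x y
    have hpt : ∀ i, D2 x (e i) (e i) y c d
        = D2 x c d (e i) y (e i) - D2 x d c (e i) y (e i) := by
      intro i
      have h1 : D2 x (e i) (e i) y c d = D2 x (e i) c d (e i) y :=
        (hD2curv x (e i)).2.1 (e i) y c d
      have h2 := hB2 x (e i) c d (e i) y
      have h3 : D2 x c d (e i) (e i) y = - D2 x c d (e i) y (e i) :=
        (hD2curv x c).anti2 d (e i) (e i) y
      have h4 : D2 x d (e i) c (e i) y = - D2 x d c (e i) (e i) y :=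
        (hD2curv x d).1 (e i) c (e i) y
      have h5 : D2 x d c (e i) (e i) y = - D2 x d c (e i) y (e i) :=
        (hD2curv x d).anti2 c (e i) (e i) y
      linarith
    rw [Finset.sum_congr rfl fun i _ => hpt i, Finset.sum_sub_distrib,
      nabla2Ric, nabla2Ric]
    ring
  have hpt2 : ∀ i, D2 (e i) (e i) a b c d
      = (D2 a (e i) (e i) b c d + CK e R (e i) a (e i) b c d)
        - (D2 b (e i) (e i) a c d + CK e R (e i) b (e i) a c d) := by
    intro i
    have hb := hB2 (e i) (e i) a b c d
    have ha : D2 (e i) a b (e i) c d = - D2 (e i) a (e i) b c d :=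
      (hD2curv (e i) a).1 b (e i) c d
    have hr1 : D2 (e i) a (e i) b c d - D2 a (e i) (e i) b c d
        = CK e R (e i) a (e i) b c d := hRicci (e i) a (e i) b c d
    have hr2 : D2 (e i) b (e i) a c d - D2 b (e i) (e i) a c d
        = CK e R (e i) b (e i) a c d := hRicci (e i) b (e i) a c d
    linarith
  rw [roughLap, Finset.sum_congr rfl fun i _ => hpt2 i, Finset.sum_sub_distrib,
    Finset.sum_add_distrib, Finset.sum_add_distrib, hG a b, hG b a]
  rw [show (∑ i, CK e R (e i) a (e i) b c d) = Cfun e R a b c d from rfl,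
    show (∑ i, CK e R (e i) b (e i) a c d) = Cfun e R b a c d from rfl]
  ring

end Jet
/-- The Weitzenböck formula for the curvature tensor:
`∇*∇R = (1/4)·Young(2,2)∇²ric − (1/2)·R*R`; in particular `∇²ric = 0` implies
`∇*∇R = −(1/2)·R*R`. -/
theorem weitzenboeck_special
    {V : Type*} [NormedAddCommGroup V] [InnerProductSpace ℝ V] {n : ℕ}
    (e : OrthonormalBasis (Fin n) ℝ V)
    (R : Curv V) (D1 : V →ₗ[ℝ] Curv V) (D2 : V →ₗ[ℝ] V →ₗ[ℝ] Curv V)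
    (hjet : IsTwoJet e R D1 D2) :
    (∀ x₁ x₂ x₃ x₄, roughLap e D2 x₁ x₂ x₃ x₄ =
        (1 / 4) * young22 (fun z₁ z₂ z₃ z₄ => nabla2Ric e D2 z₁ z₃ z₂ z₄) x₁ x₂ x₃ x₄
          - (1 / 2) * RstarR e R x₁ x₂ x₃ x₄) ∧
    ((∀ x y z w, nabla2Ric e D2 x y z w = 0) →
      ∀ x₁ x₂ x₃ x₄, roughLap e D2 x₁ x₂ x₃ x₄ = -(1 / 2) * RstarR e R x₁ x₂ x₃ x₄) := by
  obtain ⟨hR, -, hD2curv, hB2, hRicci⟩ := hjet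
  have main : ∀ a b c d : V, roughLap e D2 a b c d =
      (1 / 4) * young22 (fun z₁ z₂ z₃ z₄ => nabla2Ric e D2 z₁ z₃ z₂ z₄) a b c d
        - (1 / 2) * RstarR e R a b c d := by
    intro a b c d
    have hL := L_eq hD2curv hB2 hRicci a b c d
    have hst := RstarR_eq (e := e) hR a b c d
    have hCf1 := Cf_closed (e := e) hR a b c d
    have hCf2 := Cf_closed (e := e) hR b a c d
    have hCf3 := Cf_closed (e := e) hR c d a b
    have hCf4 := Cf_closed (e := e) hR d c a b
    have hN1 := Nq_diff (e := e) hR a b c d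
    have hN2 := Nq_diff (e := e) hR c d a b
    have hW := Wq_symm (e := e) hR a b c d
    have hS1 := Sq_symm2 (e := e) hR c a d b
    have hS2 := Sq_symm2 (e := e) hR c b d a
    have hS3 := Sq_symm2 (e := e) hR d a c b
    have hS4 := Sq_symm2 (e := e) hR d b c a
    have hT1 := tau_eq hR hRicci a c b d
    have hT2 := tau_eq hR hRicci b c a d
    have hT3 := tau_eq hR hRicci a d b c
    have hT4 := tau_eq hR hRicci b d a c
    have hA1 := lemA1 hR (ricE e R a) b c d
    have hA2 := lemA1 hR (ricE e R b) a c d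
    have hA3 := lemA1 hR (ricE e R c) d a b
    have hA4 := lemA1 hR (ricE e R d) c a b
    have hc1 := hR.1 c a b (ricE e R d)
    have hc2 := hR.1 c b a (ricE e R d)
    have hc3 := hR.1 d a b (ricE e R c)
    have hc4 := hR.1 d b a (ricE e R c)
    have hs1 := rho_sym34 (e := e) hD2curv a c d b
    have hs2 := rho_sym34 (e := e) hD2curv c a d b
    have hs3 := rho_sym34 (e := e) hD2curv b c d a
    have hs4 := rho_sym34 (e := e) hD2curv c b d a
    have hs5 := rho_sym34 (e := e) hD2curv a d c b
    have hs6 := rho_sym34 (e := e) hD2curv d a c b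
    have hs7 := rho_sym34 (e := e) hD2curv b d c a
    have hs8 := rho_sym34 (e := e) hD2curv d b c a
    simp only [young22, rowSym22]
    linarith
  refine ⟨main, fun h0 a b c d => ?_⟩
  have := main a b c d
  rw [this]
  simp only [young22, rowSym22, h0]
  ring

end CurvJet
end

section
/- Let D ∈ C₂ and define the three traces ∇²_{x,y}ric(z,w) := −Σᵢ D(x,y;z,eᵢ,w,eᵢ), ∇ₓδ_yR(z,w) := −Σᵢ D(x,eᵢ;eᵢ,y,z,w), and ∇*∇R(x₁,x₂,x₃,x₄) := −Σᵢ D(eᵢ,eᵢ;x₁,x₂,x₃,x₄). Then for all x₁,x₂,x₃,x₄ ∈ V: (i) ∇_{x₁}δ_{x₂}R(x₃,x₄) = ∇²_{x₁,x₃}ric(x₂,x₄) − ∇²_{x₁,x₄}ric(x₂,x₃); (ii) ∇*∇R(x₁,x₂,x₃,x₄) = (1/4)·Young(2,2)[(z₁,z₂,z₃,z₄) ↦ ∇²_{z₁,z₃}ric(z₂,z₄)](x₁,x₂,x₃,x₄); (iii) ∇*∇R(x₁,x₂,x₃,x₄) = ∇_{x₁}δ_{x₂}R(x₃,x₄) −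 ∇_{x₂}δ_{x₁}R(x₃,x₄). In particular, ∇²ric = 0 implies ∇δR = 0, and ∇δR = 0 implies ∇*∇R = 0. -/
open scoped RealInnerProductSpace

namespace CurvJet

variable {V : Type*} [NormedAddCommGroup V] [InnerProductSpace ℝ V] {n : ℕ}

/-- Relations between the three traces of an element of `C₂`. -/
theorem trace_hierarchy
    {V : Type*} [NormedAddCommGroup V] [InnerProductSpace ℝ V] {n : ℕ}
    (e : OrthonormalBasis (Fin n) ℝ V)
    (D : V →ₗ[ℝ] V →ₗ[ℝ] Curv V)
    (hsymm : ∀ x y z₁ z₂ z₃ z₄, D x y z₁ z₂ z₃ z₄ = D y x z₁ z₂ z₃ z₄)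
    (hcurv : ∀ x y, IsCurv (D x y))
    (hB2 : ∀ x y z w u v, D x y z w u v + D x z w y u v + D x w y z u v = 0) :
    (∀ x₁ x₂ x₃ x₄, nablaDelta e D x₁ x₂ x₃ x₄ =
        nabla2Ric e D x₁ x₃ x₂ x₄ - nabla2Ric e D x₁ x₄ x₂ x₃) ∧
    (∀ x₁ x₂ x₃ x₄, roughLap e D x₁ x₂ x₃ x₄ =
        (1 / 4) * young22 (fun z₁ z₂ z₃ z₄ => nabla2Ric e D z₁ z₃ z₂ z₄) x₁ x₂ x₃ x₄) ∧
    (∀ x₁ x₂ x₃ x₄, roughLap e D x₁ x₂ x₃ x₄ =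
        nablaDelta e D x₁ x₂ x₃ x₄ - nablaDelta e D x₂ x₁ x₃ x₄) ∧
    ((∀ x y z w, nabla2Ric e D x y z w = 0) → (∀ x y z w, nablaDelta e D x y z w = 0)) ∧
    ((∀ x y z w, nablaDelta e D x y z w = 0) → (∀ x₁ x₂ x₃ x₄, roughLap e D x₁ x₂ x₃ x₄ = 0)) := by
  -- symmetry of nabla2Ric in the first pair
  have h12 : ∀ x y z w, nabla2Ric e D x y z w = nabla2Ric e D y x z w := by
    intro x y z w
    unfold nabla2Ric
    congr 1
    exact Finset.sum_congr rfl fun i _ => hsymm x y z (e i) w (e i)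
  -- symmetry of nabla2Ric in the second pair
  have h34 : ∀ x y z w, nabla2Ric e D x y z w = nabla2Ric e D x y w z := by
    intro x y z w
    unfold nabla2Ric
    congr 1
    exact Finset.sum_congr rfl fun i _ => (hcurv x y).2.1 z (e i) w (e i)
  -- pointwise identity for (i)
  have key : ∀ x₁ x₂ x₃ x₄, ∀ i : Fin n, D x₁ (e i) (e i) x₂ x₃ x₄ =
      D x₁ x₃ x₂ (e i) x₄ (e i) - D x₁ x₄ x₂ (e i) x₃ (e i) := by
    intro x₁ x₂ x₃ x₄ i
    have hb := hB2 x₁ (e i) x₃ x₄ (e i) x₂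
    have e1 : D x₁ (e i) x₃ x₄ (e i) x₂ = D x₁ (e i) (e i) x₂ x₃ x₄ :=
      (hcurv x₁ (e i)).2.1 x₃ x₄ (e i) x₂
    have e2 : D x₁ x₃ x₄ (e i) (e i) x₂ = - D x₁ x₃ x₂ (e i) x₄ (e i) := by
      have p := (hcurv x₁ x₃).2.1 x₄ (e i) (e i) x₂
      have a := (hcurv x₁ x₃).1 (e i) x₂ x₄ (e i)
      linarith
    have e3 : D x₁ x₄ (e i) x₃ (e i) x₂ = D x₁ x₄ x₂ (e i) x₃ (e i) := by
      have a := (hcurv x₁ x₄).1 (e i) x₃ (e i) x₂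
      have p := (hcurv x₁ x₄).2.1 x₃ (e i) (e i) x₂
      have a2 := (hcurv x₁ x₄).1 (e i) x₂ x₃ (e i)
      linarith
    linarith
  -- (i)
  have hi : ∀ x₁ x₂ x₃ x₄, nablaDelta e D x₁ x₂ x₃ x₄ =
      nabla2Ric e D x₁ x₃ x₂ x₄ - nabla2Ric e D x₁ x₄ x₂ x₃ := by
    intro x₁ x₂ x₃ x₄
    unfold nablaDelta nabla2Ric
    rw [Finset.sum_congr rfl (fun i _ => key x₁ x₂ x₃ x₄ i), Finset.sum_sub_distrib]
    ring
  -- pointwise identity for (iii)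
  have key3 : ∀ x₁ x₂ x₃ x₄, ∀ i : Fin n, D (e i) (e i) x₁ x₂ x₃ x₄ =
      D x₁ (e i) (e i) x₂ x₃ x₄ - D x₂ (e i) (e i) x₁ x₃ x₄ := by
    intro x₁ x₂ x₃ x₄ i
    have hb := hB2 (e i) (e i) x₁ x₂ x₃ x₄
    have e2 : D (e i) x₁ x₂ (e i) x₃ x₄ = - D x₁ (e i) (e i) x₂ x₃ x₄ := by
      have s := hsymm (e i) x₁ x₂ (e i) x₃ x₄
      have a := (hcurv x₁ (e i)).1 x₂ (e i) x₃ x₄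
      linarith
    have e3 : D (e i) x₂ (e i) x₁ x₃ x₄ = D x₂ (e i) (e i) x₁ x₃ x₄ :=
      hsymm (e i) x₂ (e i) x₁ x₃ x₄
    linarith
  -- (iii)
  have hiii : ∀ x₁ x₂ x₃ x₄, roughLap e D x₁ x₂ x₃ x₄ =
      nablaDelta e D x₁ x₂ x₃ x₄ - nablaDelta e D x₂ x₁ x₃ x₄ := by
    intro x₁ x₂ x₃ x₄
    unfold roughLap nablaDelta
    rw [Finset.sum_congr rfl (fun i _ => key3 x₁ x₂ x₃ x₄ i), Finset.sum_sub_distrib]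
    ring
  -- each row symmetrization collapses to 4 copies of nabla2Ric
  have hrow : ∀ a b c d, rowSym22 (fun z₁ z₂ z₃ z₄ => nabla2Ric e D z₁ z₃ z₂ z₄) a b c d =
      4 * nabla2Ric e D a c b d := by
    intro a b c d
    simp only [rowSym22]
    have h1 := h12 a c b d
    have h2 := h34 a c b d
    have h3 := h12 a c d b
    have h4 := h34 c a b d
    linarith
  -- (ii)
  have hii : ∀ x₁ x₂ x₃ x₄, roughLap e D x₁ x₂ x₃ x₄ =
      (1 / 4) * young22 (fun z₁ z₂ z₃ z₄ => nabla2Ric e D z₁ z₃ z₂ z₄) x₁ x₂ x₃ x₄ := by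
    intro x₁ x₂ x₃ x₄
    have h := hiii x₁ x₂ x₃ x₄
    rw [hi x₁ x₂ x₃ x₄, hi x₂ x₁ x₃ x₄] at h
    simp only [young22, hrow]
    linarith
  refine ⟨hi, hii, hiii, ?_, ?_⟩
  · intro h x y z w
    rw [hi, h, h, sub_zero]
  · intro h x₁ x₂ x₃ x₄
    rw [hiii, h, h, sub_zero]

end CurvJet
end

section
/- Let R be an algebraic curvature tensor on V with Ricci tensor ric := ric_R, and fix x₂,x₄,x₅,x₆ ∈ V. Consider the 5-tensor T with argument slots labeled 1,2,3,4,6, defined by T(z₁,z₂,z₃,z₄,z₆) := (R_{x₅,z₆}·R)(z₁,z₂,z₃,z₄), and let c be the Young symmetrizer of the tableau with rows {1,3,6}, {2,4} and columns {1,2}, {3,4}. Then Σᵢ (c·T)(eᵢ,x₂,eᵢ,x₄,x₆) = 6·( −2(R_{x₅,x₆}·ric)(x₂,x₄) + Σᵢ (R_{x₅,eᵢ}·R)(eᵢ,x₂,x₆,x₄) + Σᵢ (R_{x₅,eᵢ}·R)(eᵢ,x₄,x₆,x₂) − (R_{x₅,x₂}·ric)(x₄,x₆) − (R_{x₅,x₄}·ric)(x₂,x₆)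 ). -/
open scoped RealInnerProductSpace

namespace CurvJet

variable {V : Type*} [NormedAddCommGroup V] [InnerProductSpace ℝ V] {n : ℕ}

private def permA : Equiv.Perm (Fin 3) := ⟨![0,1,2], ![0,1,2], by decide, by decide⟩
private def permB : Equiv.Perm (Fin 3) := ⟨![0,2,1], ![0,2,1], by decide, by decide⟩
private def permC : Equiv.Perm (Fin 3) := ⟨![1,0,2], ![1,0,2], by decide, by decide⟩
private def permD : Equiv.Perm (Fin 3) := ⟨![1,2,0], ![2,0,1], by decide, by decide⟩
private def permE : Equiv.Perm (Fin 3) := ⟨![2,0,1], ![1,2,0], by decide, by decide⟩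
private def permF : Equiv.Perm (Fin 3) := ⟨![2,1,0], ![2,1,0], by decide, by decide⟩

theorem rowSym5_expand (T : V → V → V → V → V → ℝ) (z₁ z₂ z₃ z₄ z₅ : V) :
    rowSym5 T z₁ z₂ z₃ z₄ z₅ =
      (T z₁ z₂ z₃ z₄ z₅ + T z₁ z₄ z₃ z₂ z₅)
      + (T z₁ z₂ z₅ z₄ z₃ + T z₁ z₄ z₅ z₂ z₃)
      + (T z₃ z₂ z₁ z₄ z₅ + T z₃ z₄ z₁ z₂ z₅)
      + (T z₃ z₂ z₅ z₄ z₁ + T z₃ z₄ z₅ z₂ z₁)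
      + (T z₅ z₂ z₁ z₄ z₃ + T z₅ z₄ z₁ z₂ z₃)
      + (T z₅ z₂ z₃ z₄ z₁ + T z₅ z₄ z₃ z₂ z₁) := by
  rw [rowSym5,
    show (Finset.univ : Finset (Equiv.Perm (Fin 3))) = {permA,permB,permC,permD,permE,permF}
      from by decide]
  rw [Finset.sum_insert (by decide), Finset.sum_insert (by decide), Finset.sum_insert (by decide),
    Finset.sum_insert (by decide), Finset.sum_insert (by decide), Finset.sum_singleton]
  norm_num [permA, permB, permC, permD, permE, permF, Matrix.cons_val_zero, Matrix.cons_val_one,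
    Matrix.head_cons, Matrix.cons_val_two, Matrix.tail_cons]
  ring

/-- Trace of the Young symmetrizer with rows `{1,3,6}`, `{2,4}` applied to
the 5-tensor `(z₁,z₂,z₃,z₄,z₆) ↦ (R_{x₅,z₆}·R)(z₁,z₂,z₃,z₄)`. -/
theorem young32_trace_curv_action
    {V : Type*} [NormedAddCommGroup V] [InnerProductSpace ℝ V] {n : ℕ}
    (e : OrthonormalBasis (Fin n) ℝ V)
    (R : Curv V) (hR : IsCurv R) (x₂ x₄ x₅ x₆ : V) :
    ∑ i, young5 (fun z₁ z₂ z₃ z₄ z₆ => act4 (curvEnd e R x₅ z₆) (toFun4 R) z₁ z₂ z₃ z₄)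
        (e i) x₂ (e i) x₄ x₆ =
      6 * (-2 * act2 (curvEnd e R x₅ x₆) (ric e R) x₂ x₄
           + (∑ i, act4 (curvEnd e R x₅ (e i)) (toFun4 R) (e i) x₂ x₆ x₄)
           + (∑ i, act4 (curvEnd e R x₅ (e i)) (toFun4 R) (e i) x₄ x₆ x₂)
           - act2 (curvEnd e R x₅ x₂) (ric e R) x₄ x₆
           - act2 (curvEnd e R x₅ x₄) (ric e R) x₂ x₆) := by
  obtain ⟨hanti, hPair, hBian⟩ := hR
  have hA1 : ∀ a b c d : V, R a b c d + R b a c d = 0 := fun a b c d => by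
    linear_combination hanti a b c d
  have hA2 : ∀ a b c d : V, R a b c d + R a b d c = 0 := fun a b c d => by
    linear_combination hPair a b c d + hanti c d a b - hPair d c a b
  have h1 : ∀ w a b c d : V, act4 (curvEnd e R x₅ w) (toFun4 R) a b c d
      + act4 (curvEnd e R x₅ w) (toFun4 R) b a c d = 0 := by
    intro w a b c d
    simp only [act4, toFun4]
    linear_combination -(hA1 (curvEnd e R x₅ w a) b c d) - hA1 a (curvEnd e R x₅ w b) c d
      - hA1 a b (curvEnd e R x₅ w c) d - hA1 a b c (curvEnd e R x₅ w d)
  have h2 : ∀ w a b c d : V, act4 (curvEnd e R x₅ w) (toFun4 R) a b c d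
      + act4 (curvEnd e R x₅ w) (toFun4 R) a b d c = 0 := by
    intro w a b c d
    simp only [act4, toFun4]
    linear_combination -(hA2 (curvEnd e R x₅ w a) b c d) - hA2 a (curvEnd e R x₅ w b) c d
      - hA2 a b (curvEnd e R x₅ w c) d - hA2 a b c (curvEnd e R x₅ w d)
  have h3 : ∀ w a b c d : V, act4 (curvEnd e R x₅ w) (toFun4 R) a b c d
      - act4 (curvEnd e R x₅ w) (toFun4 R) c d a b = 0 := by
    intro w a b c d
    simp only [act4, toFun4]
    linear_combination -(hPair (curvEnd e R x₅ w a) b c d) - hPair a (curvEnd e R x₅ w b) c d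
      - hPair a b (curvEnd e R x₅ w c) d - hPair a b c (curvEnd e R x₅ w d)
  have h4 : ∀ w a b c d : V, act4 (curvEnd e R x₅ w) (toFun4 R) a b c d
      + act4 (curvEnd e R x₅ w) (toFun4 R) b c a d
      + act4 (curvEnd e R x₅ w) (toFun4 R) c a b d = 0 := by
    intro w a b c d
    simp only [act4, toFun4]
    linear_combination -(hBian (curvEnd e R x₅ w a) b c d) - hBian a (curvEnd e R x₅ w b) c d
      - hBian a b (curvEnd e R x₅ w c) d - hBian a b c (curvEnd e R x₅ w d)
  have htr : ∀ w a b : V, (∑ i, act4 (curvEnd e R x₅ w) (toFun4 R) a (e i) b (e i))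
      = - act2 (curvEnd e R x₅ w) (ric e R) a b := by
    intro w a b
    have e2 : ∀ i, R a (curvEnd e R x₅ w (e i)) b (e i)
        = ∑ j, R x₅ w (e i) (e j) * R a (e j) b (e i) := by
      intro i
      simp [curvEnd, map_sum, LinearMap.map_smul, LinearMap.sum_apply, LinearMap.smul_apply,
        smul_eq_mul]
    have e4 : ∀ i, R a (e i) b (curvEnd e R x₅ w (e i))
        = ∑ j, R x₅ w (e i) (e j) * R a (e i) b (e j) := by
      intro i
      simp [curvEnd, map_sum, LinearMap.map_smul, LinearMap.sum_apply, LinearMap.smul_apply,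
        smul_eq_mul]
    have hzero : (∑ i, R a (curvEnd e R x₅ w (e i)) b (e i))
        + (∑ i, R a (e i) b (curvEnd e R x₅ w (e i))) = 0 := by
      have hflip2 : (∑ i, ∑ j, (R x₅ w (e i) (e j) * R a (e j) b (e i)
            + R x₅ w (e i) (e j) * R a (e i) b (e j)))
          + (∑ i, ∑ j, (R x₅ w (e j) (e i) * R a (e i) b (e j)
            + R x₅ w (e j) (e i) * R a (e j) b (e i))) = 0 := by
        rw [← Finset.sum_add_distrib]
        refine Finset.sum_eq_zero fun i _ => ?_
        rw [← Finset.sum_add_distrib]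
        refine Finset.sum_eq_zero fun j _ => ?_
        linear_combination (R a (e j) b (e i) + R a (e i) b (e j)) * hA2 x₅ w (e i) (e j)
      have hc : (∑ i, ∑ j, (R x₅ w (e j) (e i) * R a (e i) b (e j)
            + R x₅ w (e j) (e i) * R a (e j) b (e i)))
          = ∑ i, ∑ j, (R x₅ w (e i) (e j) * R a (e j) b (e i)
            + R x₅ w (e i) (e j) * R a (e i) b (e j)) := Finset.sum_comm
      have key : (∑ i, ∑ j, (R x₅ w (e i) (e j) * R a (e j) b (e i)
            + R x₅ w (e i) (e j) * R a (e i) b (e j))) = 0 := by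
        linarith [hflip2, hc]
      calc (∑ i, R a (curvEnd e R x₅ w (e i)) b (e i))
            + (∑ i, R a (e i) b (curvEnd e R x₅ w (e i)))
          = ∑ i, ∑ j, (R x₅ w (e i) (e j) * R a (e j) b (e i)
              + R x₅ w (e i) (e j) * R a (e i) b (e j)) := by
            rw [← Finset.sum_add_distrib]
            exact Finset.sum_congr rfl fun i _ => by rw [e2 i, e4 i, ← Finset.sum_add_distrib]
        _ = 0 := key
    simp only [act4, toFun4, act2, ric]
    simp only [Finset.sum_neg_distrib, neg_neg, Finset.sum_add_distrib]
    linear_combination -hzero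
  have key : ∀ u : V,
      young5 (fun z₁ z₂ z₃ z₄ z₆ => act4 (curvEnd e R x₅ z₆) (toFun4 R) z₁ z₂ z₃ z₄)
        u x₂ u x₄ x₆
      = 6 * act4 (curvEnd e R x₅ u) (toFun4 R) u x₂ x₆ x₄
        + 6 * act4 (curvEnd e R x₅ u) (toFun4 R) u x₄ x₆ x₂
        + 12 * act4 (curvEnd e R x₅ x₆) (toFun4 R) x₂ u x₄ u
        + 6 * act4 (curvEnd e R x₅ x₂) (toFun4 R) x₄ u x₆ u
        + 6 * act4 (curvEnd e R x₅ x₄) (toFun4 R) x₂ u x₆ u := by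
    intro u
    simp only [young5, rowSym5_expand]
    linear_combination (2:ℝ) * h1 x₆ u x₂ u x₄ + (-3:ℝ) * h3 x₆ x₂ u u x₄ + (-4:ℝ) * h4 x₆ u x₄ x₂ u + ((3:ℝ)/2) * h2 x₆ x₄ x₂ u u + (2:ℝ) * h1 x₆ u x₄ u x₂ + (-3:ℝ) * h3 x₆ x₄ u u x₂ + (-4:ℝ) * h4 x₆ u x₂ x₄ u + ((3:ℝ)/2) * h2 x₆ x₂ x₄ u u + (6:ℝ) * h3 x₆ x₄ u x₂ u + (1:ℝ) * h3 u x₆ x₂ u x₄ + (1:ℝ) * h3 u x₆ x₄ u x₂ + (-3:ℝ) * h1 u x₂ u x₆ x₄ + (-1:ℝ) * h2 u x₂ x₄ x₆ u + (1:ℝ) * h3 u x₂ x₄ u x₆ + (2:ℝ) * h4 u u x₆ x₂ x₄ + ((-1:ℝ)/2) * h1 x₆ u u x₂ x₄ + ((-1:ℝ)/2) * h1 x₂ u u x₆ x₄ + (-2:ℝ) * h4 x₂ u x₄ x₆ u + (1:ℝ) * h2 x₂ x₄ x₆ u u + (4:ℝ) * h3 x₂ x₆ u x₄ u + (-1:ℝ)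 * h1 u x₆ u x₂ x₄ + (-1:ℝ) * h2 u x₆ x₄ x₂ u + (-1:ℝ) * h3 x₂ x₆ u u x₄ + ((-1:ℝ)/2) * h2 x₂ x₆ x₄ u u + ((-1:ℝ)/2) * h1 x₆ u u x₄ x₂ + (-2:ℝ) * h4 x₄ u x₂ x₆ u + (1:ℝ) * h2 x₄ x₂ x₆ u u + (4:ℝ) * h3 x₄ x₆ u x₂ u + ((-1:ℝ)/2) * h1 x₄ u u x₆ x₂ + (-1:ℝ) * h2 u x₄ x₂ x₆ u + (1:ℝ) * h3 u x₄ x₂ u x₆ + (2:ℝ) * h4 u u x₆ x₄ x₂ + (-3:ℝ) * h1 u x₄ u x₆ x₂ + ((-1:ℝ)/2) * h2 x₄ x₆ x₂ u u + (-1:ℝ) * h3 x₄ x₆ u u x₂ + (-1:ℝ) * h2 u x₆ x₂ x₄ u + (-1:ℝ) * h1 u x₆ u x₄ x₂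
  calc (∑ i, young5 (fun z₁ z₂ z₃ z₄ z₆ => act4 (curvEnd e R x₅ z₆) (toFun4 R) z₁ z₂ z₃ z₄)
        (e i) x₂ (e i) x₄ x₆)
      = ∑ i, (6 * act4 (curvEnd e R x₅ (e i)) (toFun4 R) (e i) x₂ x₆ x₄
        + 6 * act4 (curvEnd e R x₅ (e i)) (toFun4 R) (e i) x₄ x₆ x₂
        + 12 * act4 (curvEnd e R x₅ x₆) (toFun4 R) x₂ (e i) x₄ (e i)
        + 6 * act4 (curvEnd e R x₅ x₂) (toFun4 R) x₄ (e i) x₆ (e i)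
        + 6 * act4 (curvEnd e R x₅ x₄) (toFun4 R) x₂ (e i) x₆ (e i)) :=
        Finset.sum_congr rfl fun i _ => key (e i)
    _ = _ := by
        simp only [Finset.sum_add_distrib, ← Finset.mul_sum]
        rw [htr x₆ x₂ x₄, htr x₂ x₄ x₆, htr x₄ x₂ x₆]
        ring


end CurvJet
end

section
/- Let (R, ∇R, ∇²R) be an algebraic two-jet on V and fix x₂,x₄,x₅,x₆ ∈ V. Then −Σᵢ Young(2,2)[(z₁,z₂,z₃,z₄) ↦ ∇²_{z₁,z₃}R(x₅,z₂,x₆,z₄)](eᵢ,x₂,eᵢ,x₄) = Σ_{(σ,τ)} [ ∇*∇R(x_{τ(5)},x_{σ(2)},x_{τ(6)},x_{σ(4)}) + ∇²_{x_{σ(2)},x_{σ(4)}}ric(x_{τ(5)},x_{τ(6)}) − 2∇_{x_{σ(2)}}δ_{x_{τ(5)}}R(x_{σ(4)},x_{τ(6)}) − Σᵢ (R_{x_{σ(2)},eᵢ}·R)(eᵢ,x_{τ(5)},x_{σ(4)},x_{τ(6)}) ], where the outer sum runs over the four pairs (σ,τ) with σ a permutation of the index set {2,4} and τ a permutation of the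 index set {5,6}. -/
open scoped RealInnerProductSpace

namespace CurvJet

variable {V : Type*} [NormedAddCommGroup V] [InnerProductSpace ℝ V] {n : ℕ}

/-- One summand of the right-hand side in Statement 11, for
`p = x_{σ(2)}, q = x_{σ(4)}, u = x_{τ(5)}, v = x_{τ(6)}`. -/
noncomputable def stmt11Term {V : Type*} [NormedAddCommGroup V] [InnerProductSpace ℝ V]
    {n : ℕ} (e : OrthonormalBasis (Fin n) ℝ V) (R : Curv V)
    (D2 : V →ₗ[ℝ] V →ₗ[ℝ] Curv V) (p q u v : V) : ℝ :=
  roughLap e D2 u p v q + nabla2Ric e D2 p q u v - 2 * nablaDelta e D2 p u q v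
    - ∑ i, act4 (curvEnd e R p (e i)) (toFun4 R) (e i) u q v


/-- For a 4-tensor with first-pair antisymmetry and pair symmetry, simultaneously
swapping both pairs is a symmetry. -/
lemma curv_swapswap {T : V → V → V → V → ℝ}
    (h1 : ∀ a b c d, T a b c d = - T b a c d)
    (h2 : ∀ a b c d, T a b c d = T c d a b) (x y z w : V) :
    T x y z w = T y x w z := by
  have t1 := h1 x y z w
  have t2 := h2 y x z w
  have t3 := h1 z w y x
  have t4 := h2 w z y x
  linarith

/-- Pair symmetry composed with the swap-swap symmetry. -/
lemma curv_pairswap {T : V → V → V → V → ℝ}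
    (h1 : ∀ a b c d, T a b c d = - T b a c d)
    (h2 : ∀ a b c d, T a b c d = T c d a b) (x y z w : V) :
    T x y z w = T w z y x := by
  have t1 := h2 x y z w
  have t2 := curv_swapswap h1 h2 z w x y
  linarith

/-- The derivation action of any endomorphism preserves first-pair antisymmetry. -/
lemma act4_swap12 {R : Curv V} (hR : IsCurv R) (B : V → V) (a b c d : V) :
    act4 B (toFun4 R) a b c d = - act4 B (toFun4 R) b a c d := by
  obtain ⟨h1, h2, h3⟩ := hR
  simp only [act4, toFun4]
  have t1 := h1 (B a) b c d
  have t2 := h1 a (B b) c d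
  have t3 := h1 a b (B c) d
  have t4 := h1 a b c (B d)
  linarith

/-- The derivation action of any endomorphism preserves pair symmetry. -/
lemma act4_pair {R : Curv V} (hR : IsCurv R) (B : V → V) (a b c d : V) :
    act4 B (toFun4 R) a b c d = act4 B (toFun4 R) c d a b := by
  obtain ⟨h1, h2, h3⟩ := hR
  simp only [act4, toFun4]
  have t1 := h2 (B a) b c d
  have t2 := h2 a (B b) c d
  have t3 := h2 a b (B c) d
  have t4 := h2 a b c (B d)
  linarith

set_option maxHeartbeats 2000000 in
/-- Trace formula for the Young(2,2)-symmetrized second covariant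
derivative. -/
theorem young22_trace_nabla2
    {V : Type*} [NormedAddCommGroup V] [InnerProductSpace ℝ V] {n : ℕ}
    (e : OrthonormalBasis (Fin n) ℝ V)
    (R : Curv V) (D1 : V →ₗ[ℝ] Curv V) (D2 : V →ₗ[ℝ] V →ₗ[ℝ] Curv V)
    (hjet : IsTwoJet e R D1 D2) (x₂ x₄ x₅ x₆ : V) :
    -∑ i, young22 (fun z₁ z₂ z₃ z₄ => D2 z₁ z₃ x₅ z₂ x₆ z₄) (e i) x₂ (e i) x₄ =
      stmt11Term e R D2 x₂ x₄ x₅ x₆ + stmt11Term e R D2 x₄ x₂ x₅ x₆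
        + stmt11Term e R D2 x₂ x₄ x₆ x₅ + stmt11Term e R D2 x₄ x₂ x₆ x₅ := by

  obtain ⟨hR, hJ1, hc, hb2, hricci⟩ := hjet
  have hst : ∀ p q u v : V, stmt11Term e R D2 p q u v
      = ∑ i, (-(D2 (e i) (e i) u p v q) - D2 p q u (e i) v (e i)
          + 2 * D2 p (e i) (e i) u q v
          - act4 (curvEnd e R p (e i)) (toFun4 R) (e i) u q v) := by
    intro p q u v
    simp only [stmt11Term, roughLap, nabla2Ric, nablaDelta, Finset.sum_sub_distrib,
      Finset.sum_add_distrib, Finset.sum_neg_distrib, ← Finset.mul_sum]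
    ring
  rw [hst, hst, hst, hst, ← Finset.sum_add_distrib, ← Finset.sum_add_distrib,
    ← Finset.sum_add_distrib, ← Finset.sum_neg_distrib]
  refine Finset.sum_congr rfl fun i _ => ?_
  set E := e i with hE
  obtain ⟨hD1, hD2, hD3⟩ := hc E E
  have h1 : D2 E E x₆ x₂ x₅ x₄ = D2 E E x₅ x₄ x₆ x₂ := hD2 x₆ x₂ x₅ x₄
  have h2 : D2 E E x₆ x₄ x₅ x₂ = D2 E E x₅ x₂ x₆ x₄ := hD2 x₆ x₄ x₅ x₂
  have h3 : D2 x₂ x₄ x₆ E x₅ E = D2 x₂ x₄ x₅ E x₆ E := (hc x₂ x₄).2.1 x₆ E x₅ E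
  have h4 : D2 x₄ x₂ x₆ E x₅ E = D2 x₄ x₂ x₅ E x₆ E := (hc x₄ x₂).2.1 x₆ E x₅ E
  have r1 : D2 x₂ E x₅ E x₆ x₄ - D2 E x₂ x₅ E x₆ x₄
      = act4 (curvEnd e R x₂ E) (toFun4 R) x₅ E x₆ x₄ := hricci x₂ E x₅ E x₆ x₄
  have r2 : D2 x₂ E x₅ x₄ x₆ E - D2 E x₂ x₅ x₄ x₆ E
      = act4 (curvEnd e R x₂ E) (toFun4 R) x₅ x₄ x₆ E := hricci x₂ E x₅ x₄ x₆ E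
  have r3 : D2 x₄ E x₅ x₂ x₆ E - D2 E x₄ x₅ x₂ x₆ E
      = act4 (curvEnd e R x₄ E) (toFun4 R) x₅ x₂ x₆ E := hricci x₄ E x₅ x₂ x₆ E
  have r4 : D2 x₄ E x₅ E x₆ x₂ - D2 E x₄ x₅ E x₆ x₂
      = act4 (curvEnd e R x₄ E) (toFun4 R) x₅ E x₆ x₂ := hricci x₄ E x₅ E x₆ x₂
  have s1 : D2 x₂ E x₅ E x₆ x₄ = D2 x₂ E E x₅ x₄ x₆ :=
    curv_swapswap (hc x₂ E).1 (hc x₂ E).2.1 x₅ E x₆ x₄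
  have s2 : D2 x₂ E x₅ x₄ x₆ E = D2 x₂ E E x₆ x₄ x₅ :=
    curv_pairswap (hc x₂ E).1 (hc x₂ E).2.1 x₅ x₄ x₆ E
  have s3 : D2 x₄ E x₅ x₂ x₆ E = D2 x₄ E E x₆ x₂ x₅ :=
    curv_pairswap (hc x₄ E).1 (hc x₄ E).2.1 x₅ x₂ x₆ E
  have s4 : D2 x₄ E x₅ E x₆ x₂ = D2 x₄ E E x₅ x₂ x₆ :=
    curv_swapswap (hc x₄ E).1 (hc x₄ E).2.1 x₅ E x₆ x₂
  have g1 : act4 (curvEnd e R x₂ E) (toFun4 R) x₅ E x₆ x₄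
      = act4 (curvEnd e R x₂ E) (toFun4 R) E x₅ x₄ x₆ :=
    curv_swapswap (fun a b c d => act4_swap12 hR _ a b c d)
      (fun a b c d => act4_pair hR _ a b c d) x₅ E x₆ x₄
  have g2 : act4 (curvEnd e R x₂ E) (toFun4 R) x₅ x₄ x₆ E
      = act4 (curvEnd e R x₂ E) (toFun4 R) E x₆ x₄ x₅ :=
    curv_pairswap (fun a b c d => act4_swap12 hR _ a b c d)
      (fun a b c d => act4_pair hR _ a b c d) x₅ x₄ x₆ E
  have g3 : act4 (curvEnd e R x₄ E) (toFun4 R) x₅ x₂ x₆ E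
      = act4 (curvEnd e R x₄ E) (toFun4 R) E x₆ x₂ x₅ :=
    curv_pairswap (fun a b c d => act4_swap12 hR _ a b c d)
      (fun a b c d => act4_pair hR _ a b c d) x₅ x₂ x₆ E
  have g4 : act4 (curvEnd e R x₄ E) (toFun4 R) x₅ E x₆ x₂
      = act4 (curvEnd e R x₄ E) (toFun4 R) E x₅ x₂ x₆ :=
    curv_swapswap (fun a b c d => act4_swap12 hR _ a b c d)
      (fun a b c d => act4_pair hR _ a b c d) x₅ E x₆ x₂
  simp only [young22, rowSym22]
  linarith

end CurvJet
end
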